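/- arXiv:1907.13122 — 5 statements merged into one kernel-verified Lean document; each statement's English description precedes it below -/
import Mathlib

section
/- Let f : ℝⁿ → ℝⁿ be continuously differentiable and suppose there exists λ > 0 such that the symmetric part of its Jacobian is uniformly negative definite: (1/2)(Df(x) + Df(x)ᵀ) ≼ −λ Iₙ for all x ∈ ℝⁿ (as symmetric matrices). Then for any two solutions x(·), y(·) of the ODE ż(t) = f(z(t)) defined on [0, ∞), the Euclidean distance between them contracts exponentially at rate λ: ‖x(t) − y(t)‖ ≤ e^{−λ t} ‖x(0) − y(0)‖ for all t ≥ 0. -/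
open scoped RealInnerProductSpace

lemma key_one_sided {n : ℕ} (f : EuclideanSpace ℝ (Fin n) → EuclideanSpace ℝ (Fin n))
    (hf : ContDiff ℝ 1 f) (lam : ℝ)
    (hneg : ∀ x v : EuclideanSpace ℝ (Fin n), ⟪fderiv ℝ f x v, v⟫ ≤ -lam * ‖v‖ ^ 2)
    (a b : EuclideanSpace ℝ (Fin n)) :
    ⟪f a - f b, a - b⟫ ≤ -lam * ‖a - b‖ ^ 2 := by
  set u := a - b with hu
  set φ : ℝ → ℝ := fun s => ⟪f (b + s • u), u⟫ with hφ
  have hdiff : ∀ s : ℝ, HasDerivAt φ ⟪fderiv ℝ f (b + s • u) u, u⟫ s := by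
    intro s
    have h1 : HasDerivAt (fun s : ℝ => b + s • u) u s := by
      simpa using ((hasDerivAt_id s).smul_const u).const_add b
    have h2 : HasFDerivAt f (fderiv ℝ f (b + s • u)) (b + s • u) :=
      (hf.differentiable one_ne_zero (b + s • u)).hasFDerivAt
    have h3 : HasDerivAt (fun s : ℝ => f (b + s • u)) (fderiv ℝ f (b + s • u) u) s :=
      h2.comp_hasDerivAt s h1
    have h4 := h3.inner ℝ (hasDerivAt_const s u)
    simpa using h4
  obtain ⟨c, hc, hderiv⟩ := exists_hasDerivAt_eq_slope φ
    (fun s => ⟪fderiv ℝ f (b + s • u) u, u⟫) one_pos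
    (fun s _ => (hdiff s).continuousAt.continuousWithinAt)
    (fun s _ => hdiff s)
  have h1 : φ 1 = ⟪f a, u⟫ := by simp [hφ, hu]
  have h0 : φ 0 = ⟪f b, u⟫ := by simp [hφ]
  have : ⟪f a - f b, u⟫ = ⟪fderiv ℝ f (b + c • u) u, u⟫ := by
    rw [inner_sub_left, ← h1, ← h0]
    rw [hderiv]; ring
  rw [hu] at this ⊢
  rw [this]
  exact hneg _ _

/-- **Fundamental contraction theorem.**
If `f : ℝⁿ → ℝⁿ` is continuously differentiable and the symmetric part of its Jacobian is
uniformly negative definite, i.e. `(1/2)(Df(x) + Df(x)ᵀ) ≼ -λ Iₙ` for all `x` (equivalently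
`⟪Df(x) v, v⟫ ≤ -λ ‖v‖²` for all `x, v`), then any two solutions of `ż = f(z)` on `[0, ∞)`
approach each other exponentially at rate `λ`. -/
theorem contraction_of_uniformly_negative_jacobian
    {n : ℕ} (f : EuclideanSpace ℝ (Fin n) → EuclideanSpace ℝ (Fin n))
    (hf : ContDiff ℝ 1 f) (lam : ℝ) (hlam : 0 < lam)
    (hneg : ∀ x v : EuclideanSpace ℝ (Fin n), ⟪fderiv ℝ f x v, v⟫ ≤ -lam * ‖v‖ ^ 2)
    (x y : ℝ → EuclideanSpace ℝ (Fin n))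
    (hx : ∀ t ∈ Set.Ici (0 : ℝ), HasDerivWithinAt x (f (x t)) (Set.Ici 0) t)
    (hy : ∀ t ∈ Set.Ici (0 : ℝ), HasDerivWithinAt y (f (y t)) (Set.Ici 0) t) :
    ∀ t ∈ Set.Ici (0 : ℝ), ‖x t - y t‖ ≤ Real.exp (-lam * t) * ‖x 0 - y 0‖ := by
  intro t ht
  set u : ℝ → EuclideanSpace ℝ (Fin n) := fun s => x s - y s with hudef
  have hu : ∀ s ∈ Set.Ici (0 : ℝ),
      HasDerivWithinAt u (f (x s) - f (y s)) (Set.Ici 0) s :=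
    fun s hs => (hx s hs).sub (hy s hs)
  set g : ℝ → ℝ := fun s => Real.exp (2 * lam * s) * ⟪u s, u s⟫ with hgdef
  have hg : ∀ s ∈ Set.Ici (0 : ℝ),
      HasDerivWithinAt g
        (2 * lam * Real.exp (2 * lam * s) * ⟪u s, u s⟫ +
          Real.exp (2 * lam * s) *
            (⟪u s, f (x s) - f (y s)⟫ + ⟪f (x s) - f (y s), u s⟫)) (Set.Ici 0) s := by
    intro s hs
    have he : HasDerivAt (fun s : ℝ => Real.exp (2 * lam * s))
        (Real.exp (2 * lam * s) * (2 * lam)) s := by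
      simpa using (((hasDerivAt_id s).const_mul (2 * lam)).exp)
    have hi : HasDerivWithinAt (fun s => ⟪u s, u s⟫)
        (⟪u s, f (x s) - f (y s)⟫ + ⟪f (x s) - f (y s), u s⟫) (Set.Ici 0) s :=
      (hu s hs).inner ℝ (hu s hs)
    exact (he.hasDerivWithinAt.mul hi).congr_deriv (by ring)
  have hder_nonpos : ∀ s ∈ Set.Ici (0 : ℝ),
      2 * lam * Real.exp (2 * lam * s) * ⟪u s, u s⟫ +
        Real.exp (2 * lam * s) *
          (⟪u s, f (x s) - f (y s)⟫ + ⟪f (x s) - f (y s), u s⟫) ≤ 0 := by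
    intro s hs
    have hkey : ⟪f (x s) - f (y s), u s⟫ ≤ -lam * ‖u s‖ ^ 2 :=
      key_one_sided f hf lam hneg (x s) (y s)
    have hsym : ⟪u s, f (x s) - f (y s)⟫ = ⟪f (x s) - f (y s), u s⟫ := real_inner_comm _ _
    have hinner : ⟪u s, u s⟫ = ‖u s‖ ^ 2 := real_inner_self_eq_norm_sq _
    have hexp : (0:ℝ) < Real.exp (2 * lam * s) := Real.exp_pos _
    rw [hsym, hinner]
    nlinarith [hexp, hkey, sq_nonneg ‖u s‖]
  have hanti : AntitoneOn g (Set.Ici 0) := by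
    apply antitoneOn_of_deriv_nonpos (convex_Ici 0)
      (fun s hs => (hg s hs).continuousWithinAt)
    · intro s hs
      rw [interior_Ici] at hs
      exact (((hg s (Set.Ioi_subset_Ici_self hs)).hasDerivAt
        (Ici_mem_nhds hs)).differentiableAt).differentiableWithinAt
    · intro s hs
      rw [interior_Ici] at hs
      have hs' : s ∈ Set.Ici (0:ℝ) := Set.Ioi_subset_Ici_self hs
      have := ((hg s hs').hasDerivAt (Ici_mem_nhds hs)).deriv
      rw [this]
      exact hder_nonpos s hs'
  have hgt : g t ≤ g 0 := hanti (Set.self_mem_Ici) ht ht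
  have hg0 : g 0 = ‖u 0‖ ^ 2 := by
    simp only [hgdef, mul_zero, Real.exp_zero, one_mul, real_inner_self_eq_norm_sq]
  have hgt' : Real.exp (2 * lam * t) * ‖u t‖ ^ 2 ≤ ‖u 0‖ ^ 2 := by
    rw [hg0] at hgt
    simp only [hgdef, real_inner_self_eq_norm_sq] at hgt
    exact hgt
  have hsq : ‖u t‖ ^ 2 ≤ (Real.exp (-lam * t) * ‖u 0‖) ^ 2 := by
    have hexp : (0:ℝ) < Real.exp (2 * lam * t) := Real.exp_pos _
    have h2 : (Real.exp (-lam * t) * ‖u 0‖) ^ 2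
        = Real.exp (-(2 * lam * t)) * ‖u 0‖ ^ 2 := by
      rw [mul_pow, sq (Real.exp _), ← Real.exp_add]
      ring_nf
    rw [h2, Real.exp_neg, inv_mul_eq_div, le_div_iff₀ hexp]
    nlinarith [hgt']
  exact le_of_pow_le_pow_left₀ two_ne_zero (by positivity) hsq
end

section
/- Let 𝒳 ⊆ ℝⁿ be open and connected, let m < n, and let W : 𝒳 → ℝ^{n×n} be continuously differentiable with symmetric values; write W_⊥(x) for the upper-left (n−m)×(n−m) block of W(x). Let 𝔟 : 𝒳 → ℝ^{m×m} be continuous with 𝔟(x) invertible for every x ∈ 𝒳, define B(x) ∈ ℝ^{n×m} to have zero first n−m rows and last m rows equal to 𝔟(x); assume B is continuously differentiable with columns b₁,…,b_m, and set B_⊥ = [I_{n−m}; 0_{m×(n−m)}] ∈ ℝ^{n×(n−m)}. Then the constraints B_⊥ᵀ( ∂_{b_j}W(x) − ( (∂b_j(x)/∂x) W(x) + W(x) (∂b_j(x)/∂x)ᵀ ) ) B_⊥ = 0 hold for all j = 1,…,m and all x ∈ 𝒳 if and only if every entry of W_⊥ has vanishing partial derivative with respect to each of the last m coordinates x^{(n−m)+1},…,x^{n},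 at every x ∈ 𝒳. -/
open Matrix

attribute [local instance] Matrix.normedAddCommGroup Matrix.normedSpace

/-- The Jacobian matrix of `g` at `x`: entry `(i,j)` is `∂g^i/∂x^j`. -/
noncomputable def jacobian {n : ℕ} (g : (Fin n → ℝ) → (Fin n → ℝ)) (x : Fin n → ℝ) :
    Matrix (Fin n) (Fin n) ℝ :=
  Matrix.of fun i j => fderiv ℝ g x (Pi.single j 1) i

/-- The entrywise Lie derivative `∂_v M(x)`: entry `(i,j)` is the directional derivative of
`M_{ij}` along the vector `v` at `x`. -/
noncomputable def lieDerivMatrix {n : ℕ} (M : (Fin n → ℝ) → Matrix (Fin n) (Fin n) ℝ)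
    (v : Fin n → ℝ) (x : Fin n → ℝ) : Matrix (Fin n) (Fin n) ℝ :=
  Matrix.of fun i j => fderiv ℝ (fun y => M y i j) x v

/-- The annihilator `B_⊥ = [I_{n-m}; 0]` of the sparse input matrix. -/
def Bperp (n m : ℕ) : Matrix (Fin n) (Fin (n - m)) ℝ :=
  Matrix.of fun i k => if (i : ℕ) = (k : ℕ) then 1 else 0

noncomputable def colCLM (n m : ℕ) (j : Fin m) :
    Matrix (Fin n) (Fin m) ℝ →L[ℝ] (Fin n → ℝ) :=
  ContinuousLinearMap.pi fun i =>
    (ContinuousLinearMap.proj j).comp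
      (ContinuousLinearMap.proj (R := ℝ) (φ := fun _ : Fin n => Fin m → ℝ) i)

lemma fderiv_single_sum {n : ℕ} (f : (Fin n → ℝ) → ℝ) (x : Fin n → ℝ) (v : Fin n → ℝ) :
    fderiv ℝ f x v = ∑ k, v k * fderiv ℝ f x (Pi.single k 1) := by
  have hv : v = ∑ k, v k • (Pi.single k (1:ℝ) : Fin n → ℝ) := by
    funext i
    simp [Finset.sum_apply, Pi.single_apply]
  conv_lhs => rw [hv]
  rw [map_sum]
  simp

lemma sum_tail {n m : ℕ} (hmn : m ≤ n) (f : Fin n → ℝ)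
    (hf : ∀ k : Fin n, (k : ℕ) < n - m → f k = 0) :
    ∑ k, f k = ∑ i : Fin m, f ⟨n - m + (i : ℕ), by omega⟩ := by
  have h : (n - m) + m = n := by omega
  let e : Fin (n - m) ⊕ Fin m ≃ Fin n := finSumFinEquiv.trans (finCongr h)
  calc ∑ k, f k = ∑ s : Fin (n - m) ⊕ Fin m, f (e s) := (Equiv.sum_comp e f).symm
    _ = ∑ p : Fin (n - m), f (e (Sum.inl p)) + ∑ i : Fin m, f (e (Sum.inr i)) :=
        Fintype.sum_sum_type _
    _ = ∑ i : Fin m, f ⟨n - m + (i : ℕ), by omega⟩ := by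
        rw [Finset.sum_eq_zero, zero_add]
        · refine Finset.sum_congr rfl fun i _ => ?_
          congr 1
        · intro p _
          apply hf
          simp only [e, finCongr_apply, Equiv.trans_apply, finSumFinEquiv_apply_left,
            Fin.coe_cast, Fin.coe_castAdd]
          exact p.isLt


/-- **Killing-field constraint for sparse input matrices.** For the input matrix
`B(x) = [0_{(n-m)×m}; 𝔟(x)]` with `𝔟(x)` invertible and annihilator `B_⊥ = [I_{n-m}; 0]`,
the CCM constraints `B_⊥ᵀ(∂_{b_j}W − ((∂b_j/∂x)W + W(∂b_j/∂x)ᵀ))B_⊥ = 0` hold for all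
`j` and all `x ∈ X` if and only if every entry of the upper-left `(n-m)×(n-m)` block of `W`
has vanishing partial derivative with respect to each of the last `m` coordinates at every
`x ∈ X`. -/
theorem killing_constraint_iff_block_independent
    {n m : ℕ} (hmn : m < n)
    (X : Set (Fin n → ℝ)) (hX : IsOpen X) (hXconn : IsConnected X)
    (W : (Fin n → ℝ) → Matrix (Fin n) (Fin n) ℝ)
    (hW : ContDiffOn ℝ 1 W X) (hWsymm : ∀ x ∈ X, (W x).IsSymm)
    (b : (Fin n → ℝ) → Matrix (Fin m) (Fin m) ℝ)
    (hbcont : ContinuousOn b X) (hbinv : ∀ x ∈ X, IsUnit (b x))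
    (B : (Fin n → ℝ) → Matrix (Fin n) (Fin m) ℝ)
    (hBdiff : ContDiffOn ℝ 1 B X)
    (hBtop : ∀ x, ∀ i : Fin n, ∀ j : Fin m, (i : ℕ) < n - m → B x i j = 0)
    (hBbot : ∀ x, ∀ i : Fin m, ∀ j : Fin m,
      B x ⟨n - m + (i : ℕ), by omega⟩ j = b x i j) :
    (∀ j : Fin m, ∀ x ∈ X,
        (Bperp n m)ᵀ *
          (lieDerivMatrix W (fun i => B x i j) x -
            (jacobian (fun y i => B y i j) x * W x +
              W x * (jacobian (fun y i => B y i j) x)ᵀ)) *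
          Bperp n m = 0)
      ↔
    (∀ p q : Fin (n - m), ∀ i : Fin m, ∀ x ∈ X,
        fderiv ℝ (fun y => W y ⟨(p : ℕ), by omega⟩ ⟨(q : ℕ), by omega⟩) x
          (Pi.single ⟨n - m + (i : ℕ), by omega⟩ 1) = 0) := by
  classical
  have htl : ∀ i : Fin m, n - m + (i : ℕ) < n := fun i => by omega
  set tl : Fin m → Fin n := fun i => ⟨n - m + (i : ℕ), htl i⟩ with htl_def
  -- key entry formula
  have key : ∀ x ∈ X, ∀ j : Fin m, ∀ p q : Fin (n - m),
      ∀ (hP : (p : ℕ) < n) (hQ : (q : ℕ) < n),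
      ((Bperp n m)ᵀ *
          (lieDerivMatrix W (fun i => B x i j) x -
            (jacobian (fun y i => B y i j) x * W x +
              W x * (jacobian (fun y i => B y i j) x)ᵀ)) *
          Bperp n m) p q
        = ∑ i : Fin m, b x i j *
            fderiv ℝ (fun y => W y ⟨(p : ℕ), hP⟩ ⟨(q : ℕ), hQ⟩) x
              (Pi.single (tl i) 1) := by
    intro x hx j p q hPn hQn
    set P : Fin n := ⟨(p : ℕ), hPn⟩ with hP
    set Q : Fin n := ⟨(q : ℕ), hQn⟩ with hQ
    -- collapse the Bperp sandwich
    have hBperpL : ∀ i' : Fin n, Bperp n m i' p = if i' = P then 1 else 0 := by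
      intro i'; simp [Bperp, Fin.ext_iff, hP]
    have hBperpR : ∀ i' : Fin n, Bperp n m i' q = if i' = Q then 1 else 0 := by
      intro i'; simp [Bperp, Fin.ext_iff, hQ]
    have hsandwich : ∀ M : Matrix (Fin n) (Fin n) ℝ,
        ((Bperp n m)ᵀ * M * Bperp n m) p q = M P Q := by
      intro M
      simp only [Matrix.mul_apply, Matrix.transpose_apply, hBperpL, hBperpR,
        ite_mul, mul_ite, one_mul, mul_one, zero_mul, mul_zero,
        Finset.sum_ite_eq, Finset.sum_ite_eq', Finset.mem_univ, if_true]
    rw [hsandwich]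
    -- differentiability of the j-th column of B
    have hBx : DifferentiableAt ℝ B x :=
      (hBdiff.differentiableOn one_ne_zero).differentiableAt (hX.mem_nhds hx)
    have hg : DifferentiableAt ℝ (fun y i => B y i j) x :=
      (colCLM n m j).differentiableAt.comp x hBx
    -- the first n-m rows of the Jacobian of the column vanish
    have hrow : ∀ i' : Fin n, (i' : ℕ) < n - m → ∀ r : Fin n,
        jacobian (fun y i => B y i j) x i' r = 0 := by
      intro i' hi' r
      have hconst : (fun y => B y i' j) = fun _ : Fin n → ℝ => (0 : ℝ) :=
        funext fun y => hBtop y i' j hi'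
      have hcomp : fderiv ℝ ((ContinuousLinearMap.proj i' : (Fin n → ℝ) →L[ℝ] ℝ) ∘
            (fun y i => B y i j)) x
          = (ContinuousLinearMap.proj i' : (Fin n → ℝ) →L[ℝ] ℝ).comp
              (fderiv ℝ (fun y i => B y i j) x) := by
        rw [fderiv_comp x (ContinuousLinearMap.differentiableAt _) hg,
          ContinuousLinearMap.fderiv]
      have hzero : fderiv ℝ ((ContinuousLinearMap.proj i' : (Fin n → ℝ) →L[ℝ] ℝ) ∘
            (fun y i => B y i j)) x = 0 := by
        have heq : ((ContinuousLinearMap.proj i' : (Fin n → ℝ) →L[ℝ] ℝ) ∘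
            (fun y i => B y i j)) = fun y => B y i' j := rfl
        rw [heq, hconst]
        exact fderiv_const_apply 0
      have hfinal : (ContinuousLinearMap.proj i' : (Fin n → ℝ) →L[ℝ] ℝ).comp
          (fderiv ℝ (fun y i => B y i j) x) = 0 := hcomp.symm.trans hzero
      calc jacobian (fun y i => B y i j) x i' r
          = ((ContinuousLinearMap.proj i' : (Fin n → ℝ) →L[ℝ] ℝ).comp
              (fderiv ℝ (fun y i => B y i j) x)) (Pi.single r 1) := rfl
        _ = (0 : (Fin n → ℝ) →L[ℝ] ℝ) (Pi.single r 1) := by rw [hfinal]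
        _ = 0 := rfl
    -- kill the Jacobian terms
    have h1 : (jacobian (fun y i => B y i j) x * W x) P Q = 0 := by
      rw [Matrix.mul_apply]
      exact Finset.sum_eq_zero fun r _ => by rw [hrow P p.isLt r, zero_mul]
    have h2 : (W x * (jacobian (fun y i => B y i j) x)ᵀ) P Q = 0 := by
      rw [Matrix.mul_apply]
      exact Finset.sum_eq_zero fun r _ => by
        rw [Matrix.transpose_apply, hrow Q q.isLt r, mul_zero]
    -- expand the Lie derivative term
    have h3 : lieDerivMatrix W (fun i => B x i j) x P Q
        = ∑ i : Fin m, b x i j *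
            fderiv ℝ (fun y => W y P Q) x (Pi.single (tl i) 1) := by
      show fderiv ℝ (fun y => W y P Q) x (fun i => B x i j) = _
      rw [fderiv_single_sum]
      rw [sum_tail hmn.le (fun k => B x k j * fderiv ℝ (fun y => W y P Q) x (Pi.single k 1))
        (fun k hk => by show B x k j * _ = 0; rw [hBtop x k j hk, zero_mul])]
      exact Finset.sum_congr rfl fun i _ => by rw [hBbot x i j]
    simp only [Matrix.sub_apply, Matrix.add_apply, h1, h2, h3, add_zero, sub_zero]
  constructor
  · intro h p q i x hx
    have hPn : (p : ℕ) < n := by omega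
    have hQn : (q : ℕ) < n := by omega
    set d : Fin m → ℝ := fun i =>
      fderiv ℝ (fun y => W y ⟨(p : ℕ), hPn⟩ ⟨(q : ℕ), hQn⟩) x (Pi.single (tl i) 1) with hd
    have hvm : d ᵥ* b x = 0 := by
      funext j
      have h0 := congrFun (congrFun (h j x hx) p) q
      rw [key x hx j p q hPn hQn] at h0
      simp only [Matrix.zero_apply] at h0
      calc (d ᵥ* b x) j = ∑ i, d i * b x i j := rfl
        _ = ∑ i, b x i j * d i := by simp [mul_comm]
        _ = 0 := h0
    obtain ⟨binv, hbinv'⟩ := (hbinv x hx).exists_right_inv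
    have hd0 : d = 0 := by
      calc d = d ᵥ* (1 : Matrix (Fin m) (Fin m) ℝ) := (Matrix.vecMul_one d).symm
        _ = d ᵥ* (b x * binv) := by rw [hbinv']
        _ = (d ᵥ* b x) ᵥ* binv := (Matrix.vecMul_vecMul d (b x) binv).symm
        _ = (0 : Fin m → ℝ) ᵥ* binv := by rw [hvm]
        _ = 0 := Matrix.zero_vecMul binv
    exact congrFun hd0 i
  · intro h j x hx
    ext p q
    rw [key x hx j p q (by omega) (by omega), Matrix.zero_apply]
    exact Finset.sum_eq_zero fun i _ => by rw [h p q i x hx, mul_zero]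
end

section
/- (Derivative Reproducing Property in Vector-Valued RKHS) Let 𝒳 ⊆ ℝⁿ be open, and let H_K be an ℝⁿ-valued reproducing kernel Hilbert space on 𝒳 with operator-valued reproducing kernel K ∈ C²(𝒳 × 𝒳; ℝ^{n×n}). Then for every x ∈ 𝒳, y ∈ ℝⁿ, and j ∈ {1,…,n}: (a) the function ∂_j K_x y : z ↦ (∂K(z,s)/∂s^j |_{s=x}) y belongs to H_K; and (b) every f ∈ H_K is differentiable at x and satisfies the derivative reproducing property ⟨∂f(x)/∂x^j, y⟩ = ⟨f, ∂_j K_x y⟩_{H_K}. -/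
open Matrix
open scoped RealInnerProductSpace

attribute [local instance] Matrix.normedAddCommGroup Matrix.normedSpace

set_option maxHeartbeats 1000000

open Filter Metric Asymptotics
open scoped Topology

/-- Second-difference estimate via the mean value theorem. -/
lemma secondDiff_bound {E : Type*} [NormedAddCommGroup E] [NormedSpace ℝ E]
    (Ψ : E → ℝ) (Φ : E → E →L[ℝ] ℝ) (Q : E →L[ℝ] E →L[ℝ] ℝ)
    (p : E) (δ ε : ℝ) (hε : 0 ≤ ε)
    (hd : ∀ q ∈ Metric.ball p δ, HasFDerivAt Ψ (Φ q) q)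
    (hQ : ∀ q ∈ Metric.ball p δ, ‖Φ q - Φ p - Q (q - p)‖ ≤ ε * ‖q - p‖)
    (u v : E) (huv : ‖u‖ + ‖v‖ < δ) :
    |Ψ (p + u + v) - Ψ (p + u) - Ψ (p + v) + Ψ p - Q v u| ≤ ε * ((2 * ‖u‖ + ‖v‖) * ‖u‖) := by
  have hmem1 : ∀ t : ℝ, t ∈ Set.Icc (0:ℝ) 1 → p + t • u + v ∈ Metric.ball p δ := by
    intro t ht
    rw [Metric.mem_ball, dist_eq_norm]
    have : p + t • u + v - p = t • u + v := by abel
    rw [this]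
    calc ‖t • u + v‖ ≤ ‖t • u‖ + ‖v‖ := norm_add_le _ _
      _ ≤ ‖u‖ + ‖v‖ := by
          have : ‖t • u‖ = |t| * ‖u‖ := by rw [norm_smul, Real.norm_eq_abs]
          rw [this]
          have ht1 : |t| ≤ 1 := by
            rw [abs_le]; exact ⟨le_trans (by norm_num) ht.1, ht.2⟩
          nlinarith [norm_nonneg u, norm_nonneg v]
      _ < δ := huv
  have hmem2 : ∀ t : ℝ, t ∈ Set.Icc (0:ℝ) 1 → p + t • u ∈ Metric.ball p δ := by
    intro t ht
    rw [Metric.mem_ball, dist_eq_norm]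
    have : p + t • u - p = t • u := by abel
    rw [this, norm_smul, Real.norm_eq_abs]
    have ht1 : |t| ≤ 1 := by rw [abs_le]; exact ⟨le_trans (by norm_num) ht.1, ht.2⟩
    nlinarith [norm_nonneg u, norm_nonneg v]
  set γ : ℝ → ℝ := fun t => Ψ (p + t • u + v) - Ψ (p + t • u) with hγ
  set γ' : ℝ → ℝ := fun t => Φ (p + t • u + v) u - Φ (p + t • u) u with hγ'
  have hderiv : ∀ t ∈ Set.Icc (0:ℝ) 1, HasDerivAt γ (γ' t) t := by
    intro t ht
    have hpath1 : HasDerivAt (fun t : ℝ => p + t • u + v) u t := by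
      have h1 : HasDerivAt (fun t : ℝ => t • u) ((1:ℝ) • u) t := (hasDerivAt_id t).smul_const u
      simpa using (h1.const_add p).add_const v
    have hpath2 : HasDerivAt (fun t : ℝ => p + t • u) u t := by
      have h1 : HasDerivAt (fun t : ℝ => t • u) ((1:ℝ) • u) t := (hasDerivAt_id t).smul_const u
      simpa using h1.const_add p
    have h1 := (hd _ (hmem1 t ht)).comp_hasDerivAt t hpath1
    have h2 := (hd _ (hmem2 t ht)).comp_hasDerivAt t hpath2
    exact h1.sub h2
  obtain ⟨c, hc, hceq⟩ := exists_hasDerivAt_eq_slope γ γ' one_pos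
    (fun t ht => (hderiv t ht).continuousAt.continuousWithinAt)
    (fun t ht => hderiv t (Set.mem_Icc_of_Ioo ht))
  have hcIcc : c ∈ Set.Icc (0:ℝ) 1 := Set.mem_Icc_of_Ioo hc
  have hγ1 : γ 1 = Ψ (p + u + v) - Ψ (p + u) := by simp [hγ]
  have hγ0 : γ 0 = Ψ (p + v) - Ψ p := by simp [hγ]
  have hsum : Ψ (p + u + v) - Ψ (p + u) - Ψ (p + v) + Ψ p = γ' c := by
    rw [hceq, hγ1, hγ0]; ring
  rw [hsum]
  -- now estimate γ' c - Q v u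
  have hkey : γ' c - Q v u = (Φ (p + c • u + v) - Φ p - Q (c • u + v) -
      (Φ (p + c • u) - Φ p - Q (c • u))) u := by
    simp only [ContinuousLinearMap.sub_apply, _root_.map_add]
    simp [hγ']
    ring
  rw [hkey]
  have hA := hQ _ (hmem1 c hcIcc)
  have hB := hQ _ (hmem2 c hcIcc)
  have e1 : p + c • u + v - p = c • u + v := by abel
  have e2 : p + c • u - p = c • u := by abel
  rw [e1] at hA
  rw [e2] at hB
  have hc1 : |c| ≤ 1 := by rw [abs_le]; exact ⟨le_trans (by norm_num) hcIcc.1, hcIcc.2⟩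
  have hcu : ‖c • u‖ ≤ ‖u‖ := by
    rw [norm_smul, Real.norm_eq_abs]
    nlinarith [norm_nonneg u]
  calc |(Φ (p + c • u + v) - Φ p - Q (c • u + v) - (Φ (p + c • u) - Φ p - Q (c • u))) u|
      ≤ ‖Φ (p + c • u + v) - Φ p - Q (c • u + v) - (Φ (p + c • u) - Φ p - Q (c • u))‖ * ‖u‖ := by
        rw [← Real.norm_eq_abs]
        exact ContinuousLinearMap.le_opNorm _ u
    _ ≤ (ε * ‖c • u + v‖ + ε * ‖c • u‖) * ‖u‖ := by
        have := norm_sub_le (Φ (p + c • u + v) - Φ p - Q (c • u + v))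
          (Φ (p + c • u) - Φ p - Q (c • u))
        have h := le_trans this (add_le_add hA hB)
        exact mul_le_mul_of_nonneg_right h (norm_nonneg u)
    _ ≤ ε * ((2 * ‖u‖ + ‖v‖) * ‖u‖) := by
        have h1 : ‖c • u + v‖ ≤ ‖u‖ + ‖v‖ :=
          le_trans (norm_add_le _ _) (add_le_add hcu le_rfl)
        nlinarith [norm_nonneg u, norm_nonneg v, mul_le_mul_of_nonneg_left h1 hε,
          mul_le_mul_of_nonneg_left hcu hε]

/-- Core lemma: if the Gram function of `F` is `C²`, then `F` is differentiable. -/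
lemma differentiableAt_of_inner_contDiffOn {n : ℕ} {H : Type} [NormedAddCommGroup H]
    [InnerProductSpace ℝ H] [CompleteSpace H]
    (F : (Fin n → ℝ) → H) (Ψ : ((Fin n → ℝ) × (Fin n → ℝ)) → ℝ)
    (U : Set (Fin n → ℝ)) (hU : IsOpen U) (x : Fin n → ℝ) (hx : x ∈ U)
    (hΨF : ∀ a ∈ U, ∀ b ∈ U, Ψ (a, b) = ⟪F a, F b⟫)
    (hΨ : ContDiffOn ℝ 2 Ψ (U ×ˢ U)) :
    DifferentiableAt ℝ F x := by
  classical
  set e : Fin n → (Fin n → ℝ) := fun j => Pi.single j 1 with he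
  have hne : ∀ j, ‖e j‖ = 1 := by
    intro j; rw [he]; simp [Pi.norm_single]
  set p : (Fin n → ℝ) × (Fin n → ℝ) := (x, x) with hp
  have hUU : IsOpen (U ×ˢ U) := hU.prod hU
  have hpU : p ∈ U ×ˢ U := ⟨hx, hx⟩
  have hΨd : ∀ q ∈ U ×ˢ U, HasFDerivAt Ψ (fderiv ℝ Ψ q) q := fun q hq =>
    ((hΨ.contDiffAt (hUU.mem_nhds hq)).differentiableAt (by norm_num)).hasFDerivAt
  set Φ : ((Fin n → ℝ) × (Fin n → ℝ)) → ((Fin n → ℝ) × (Fin n → ℝ)) →L[ℝ] ℝ :=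
    fderiv ℝ Ψ with hΦdef
  have hΦd : HasFDerivAt Φ (fderiv ℝ Φ p) p := by
    have h1 : ContDiffAt ℝ 1 Φ p :=
      (hΨ.contDiffAt (hUU.mem_nhds hpU)).fderiv_right (le_refl 2)
    exact (h1.differentiableAt one_ne_zero).hasFDerivAt
  set Q := fderiv ℝ Φ p with hQdef
  have hev : ∀ᶠ r in 𝓝 p, HasFDerivAt Ψ (Φ r) r := by
    filter_upwards [hUU.mem_nhds hpU] with r hr using hΨd r hr
  have hQsymm : ∀ v w, Q v w = Q w v := fun v w =>
    second_derivative_symmetric_of_eventually hev hΦd v w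
  have hquant : ∀ ε : ℝ, 0 < ε → ∃ δ > 0, Metric.ball p δ ⊆ U ×ˢ U ∧
      ∀ q ∈ Metric.ball p δ, ‖Φ q - Φ p - Q (q - p)‖ ≤ ε * ‖q - p‖ := by
    intro ε hε
    have h1 := (hΦd.isLittleO).def hε
    have h2 : ∀ᶠ q in 𝓝 p, q ∈ U ×ˢ U := hUU.eventually_mem hpU
    rcases Metric.eventually_nhds_iff_ball.1 (h2.and h1) with ⟨δ, hδ, hball⟩
    exact ⟨δ, hδ, fun q hq => (hball q hq).1, fun q hq => (hball q hq).2⟩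
  set q : Fin n → ℝ → H := fun j t => t⁻¹ • (F (x + t • e j) - F x) with hqdef
  have hinner : ∀ (j k : Fin n) (t s : ℝ), x + t • e j ∈ U → x + s • e k ∈ U →
      ⟪q j t, q k s⟫ = (t⁻¹ * s⁻¹) * (Ψ (x + t • e j, x + s • e k) - Ψ (x + t • e j, x)
        - Ψ (x, x + s • e k) + Ψ (x, x)) := by
    intro j k t s hjt hks
    rw [hqdef]
    simp only [real_inner_smul_left, real_inner_smul_right, inner_sub_left, inner_sub_right]
    rw [hΨF _ hjt _ hks, hΨF _ hjt _ hx, hΨF _ hx _ hks, hΨF _ hx _ hx]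
    ring
  have hbound : ∀ ε : ℝ, 0 < ε → ∃ δ > 0, ∀ (j k : Fin n) (t s : ℝ), t ≠ 0 → s ≠ 0 →
      |t| < δ → |s| < δ →
      |⟪q j t, q k s⟫ - Q (e j, 0) (0, e k)| ≤ ε := by
    intro ε hε
    obtain ⟨δ, hδ, hball, hQb⟩ := hquant (ε / 3) (by positivity)
    refine ⟨δ / 2, by positivity, ?_⟩
    intro j k t s ht hs htδ hsδ
    have hnu : ‖((t • e j, 0) : (Fin n → ℝ) × (Fin n → ℝ))‖ = |t| := by
      rw [Prod.norm_def]; simp [norm_smul, hne]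
    have hnv : ‖(((0 : Fin n → ℝ), s • e k) : (Fin n → ℝ) × (Fin n → ℝ))‖ = |s| := by
      rw [Prod.norm_def]; simp [norm_smul, hne]
    have hsum : ‖((t • e j, 0) : (Fin n → ℝ) × (Fin n → ℝ))‖ +
        ‖(((0 : Fin n → ℝ), s • e k) : (Fin n → ℝ) × (Fin n → ℝ))‖ < δ := by
      rw [hnu, hnv]; linarith
    have hsum' : ‖(((0 : Fin n → ℝ), s • e k) : (Fin n → ℝ) × (Fin n → ℝ))‖ +
        ‖((t • e j, 0) : (Fin n → ℝ) × (Fin n → ℝ))‖ < δ := by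
      rw [hnu, hnv]; linarith
    have hd' : ∀ r ∈ Metric.ball p δ, HasFDerivAt Ψ (Φ r) r := fun r hr => hΨd r (hball hr)
    have hmemt : x + t • e j ∈ U := by
      have : ((x + t • e j, x) : _ × _) ∈ Metric.ball p δ := by
        rw [Metric.mem_ball, Prod.dist_eq]
        simp only [dist_self, dist_eq_norm, hp]
        have : x + t • e j - x = t • e j := by abel
        rw [this, norm_smul, Real.norm_eq_abs, hne, mul_one]
        calc max |t| 0 = |t| := max_eq_left (abs_nonneg t)
          _ < δ := by linarith
      exact (hball this).1
    have hmems : x + s • e k ∈ U := by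
      have : ((x, x + s • e k) : _ × _) ∈ Metric.ball p δ := by
        rw [Metric.mem_ball, Prod.dist_eq]
        simp only [dist_self, dist_eq_norm, hp]
        have : x + s • e k - x = s • e k := by abel
        rw [this, norm_smul, Real.norm_eq_abs, hne, mul_one]
        calc max 0 |s| = |s| := max_eq_right (abs_nonneg s)
          _ < δ := by linarith
      exact (hball this).2
    set u : (Fin n → ℝ) × (Fin n → ℝ) := (t • e j, 0) with hu
    set v : (Fin n → ℝ) × (Fin n → ℝ) := (0, s • e k) with hv
    have hpuv : p + u + v = (x + t • e j, x + s • e k) := by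
      rw [hp, hu, hv]; ext <;> simp
    have hpu : p + u = (x + t • e j, x) := by rw [hp, hu]; ext <;> simp
    have hpv : p + v = (x, x + s • e k) := by rw [hp, hv]; ext <;> simp
    have hB1 := secondDiff_bound Ψ Φ Q p δ (ε / 3) (by positivity) hd' hQb u v hsum
    have hB2 := secondDiff_bound Ψ Φ Q p δ (ε / 3) (by positivity) hd' hQb v u hsum'
    rw [hpuv, hpu, hpv, hnu, hnv] at hB1
    have hpvu : p + v + u = (x + t • e j, x + s • e k) := by
      rw [hp, hu, hv]; ext <;> simp
    rw [hpvu, hpu, hpv, hnu, hnv] at hB2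
    have hQvu : Q v u = t * s * Q (e j, 0) (0, e k) := by
      have hv' : v = s • (((0 : Fin n → ℝ), e k) : _ × _) := by
        rw [hv]; ext <;> simp
      have hu' : u = t • (((e j, (0 : Fin n → ℝ))) : _ × _) := by
        rw [hu]; ext <;> simp
      rw [hv', hu', _root_.map_smul]
      simp only [ContinuousLinearMap.smul_apply, _root_.map_smul, smul_eq_mul]
      rw [hQsymm (0, e k) (e j, 0)]
      ring
    have hQuv : Q u v = t * s * Q (e j, 0) (0, e k) := by
      have hv' : v = s • (((0 : Fin n → ℝ), e k) : _ × _) := by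
        rw [hv]; ext <;> simp
      have hu' : u = t • (((e j, (0 : Fin n → ℝ))) : _ × _) := by
        rw [hu]; ext <;> simp
      rw [hv', hu', _root_.map_smul]
      simp only [ContinuousLinearMap.smul_apply, _root_.map_smul, smul_eq_mul]
      ring
    set N := Ψ (x + t • e j, x + s • e k) - Ψ (x + t • e j, x) - Ψ (x, x + s • e k) + Ψ (x, x)
      with hN
    set B := Q (e j, 0) (0, e k) with hBdef
    rw [hQvu] at hB1
    rw [hQuv] at hB2
    have hreorder : Ψ (x + t • e j, x + s • e k) - Ψ (x, x + s • e k) - Ψ (x + t • e j, x)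
        + Ψ (x, x) = N := by rw [hN]; ring
    rw [hreorder] at hB2
    have hNts : |N - t * s * B| ≤ ε * (|t| * |s|) := by
      rcases le_total |t| |s| with hts | hts
      · calc |N - t * s * B| ≤ ε / 3 * ((2 * |t| + |s|) * |t|) := hB1
          _ ≤ ε * (|t| * |s|) := by
            nlinarith [mul_le_mul_of_nonneg_left
              (mul_le_mul_of_nonneg_right hts (abs_nonneg t)) hε.le]
      · calc |N - t * s * B| ≤ ε / 3 * ((2 * |s| + |t|) * |s|) := hB2
          _ ≤ ε * (|t| * |s|) := by
            nlinarith [mul_le_mul_of_nonneg_left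
              (mul_le_mul_of_nonneg_right hts (abs_nonneg s)) hε.le]
    have ht' : |t| > 0 := abs_pos.2 ht
    have hs' : |s| > 0 := abs_pos.2 hs
    have heq : ⟪q j t, q k s⟫ - B = (t⁻¹ * s⁻¹) * (N - t * s * B) := by
      rw [hinner j k t s hmemt hmems]
      field_simp
      try ring
    rw [heq, abs_mul]
    have h2 : |t⁻¹ * s⁻¹| = (|t| * |s|)⁻¹ := by
      rw [abs_mul, abs_inv, abs_inv, mul_inv]
    rw [h2, inv_mul_le_iff₀ (by positivity)]
    calc |N - t * s * B| ≤ ε * (|t| * |s|) := hNts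
      _ = |t| * |s| * ε := by ring
  -- Cauchy property of difference quotients
  have hcauchy : ∀ j : Fin n, Cauchy (Filter.map (q j) (𝓝[≠] (0:ℝ))) := by
    intro j
    rw [Metric.cauchy_iff]
    refine ⟨Filter.map_neBot, ?_⟩
    intro ε hε
    obtain ⟨δ, hδ, hb⟩ := hbound (ε ^ 2 / 8) (by positivity)
    refine ⟨q j '' (Metric.ball (0:ℝ) δ ∩ {(0:ℝ)}ᶜ), ?_, ?_⟩
    · apply Filter.image_mem_map
      exact Filter.inter_mem (mem_nhdsWithin_of_mem_nhds (Metric.ball_mem_nhds _ hδ))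
        self_mem_nhdsWithin
    · rintro a ⟨t, ⟨htb, htne⟩, rfl⟩ b ⟨s, ⟨hsb, hsne⟩, rfl⟩
      have htδ : |t| < δ := by rwa [Metric.mem_ball, Real.dist_eq, sub_zero] at htb
      have hsδ : |s| < δ := by rwa [Metric.mem_ball, Real.dist_eq, sub_zero] at hsb
      have htne' : t ≠ 0 := htne
      have hsne' : s ≠ 0 := hsne
      have htt := hb j j t t htne' htne' htδ htδ
      have hts := hb j j t s htne' hsne' htδ hsδ
      have hss := hb j j s s hsne' hsne' hsδ hsδ
      have hd2 : dist (q j t) (q j s) ^ 2 =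
          ⟪q j t, q j t⟫ - 2 * ⟪q j t, q j s⟫ + ⟪q j s, q j s⟫ := by
        rw [dist_eq_norm, norm_sub_sq_real, real_inner_self_eq_norm_sq,
          real_inner_self_eq_norm_sq]
      have h1 := abs_le.1 htt
      have h2 := abs_le.1 hts
      have h4 := abs_le.1 hss
      have hdn : (0:ℝ) ≤ dist (q j t) (q j s) := dist_nonneg
      have hds : dist (q j t) (q j s) ^ 2 ≤ ε ^ 2 / 2 := by linarith [hd2, h1.2, h2.1, h4.2]
      by_contra hcon
      push_neg at hcon
      have h5 : ε ^ 2 ≤ dist (q j t) (q j s) ^ 2 := pow_le_pow_left₀ hε.le hcon 2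
      have h6 : 0 < ε ^ 2 := by positivity
      linarith
  -- limits of difference quotients
  have hglim : ∀ j : Fin n, ∃ gj : H, Tendsto (q j) (𝓝[≠] (0:ℝ)) (𝓝 gj) := fun j =>
    CompleteSpace.complete (hcauchy j)
  choose g hg using hglim
  haveI hNB : ((𝓝[≠] (0:ℝ)) ×ˢ (𝓝[≠] (0:ℝ))).NeBot :=
    Filter.prod_neBot.2 ⟨inferInstance, inferInstance⟩
  -- inner products of the limits
  have hgg : ∀ j k, ⟪g j, g k⟫ = Q (e j, 0) (0, e k) := by
    intro j k
    have h1 : Tendsto (fun ts : ℝ × ℝ => ⟪q j ts.1, q k ts.2⟫)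
        ((𝓝[≠] (0:ℝ)) ×ˢ (𝓝[≠] (0:ℝ))) (𝓝 ⟪g j, g k⟫) :=
      ((hg j).comp tendsto_fst).inner ((hg k).comp tendsto_snd)
    have h2 : Tendsto (fun ts : ℝ × ℝ => ⟪q j ts.1, q k ts.2⟫)
        ((𝓝[≠] (0:ℝ)) ×ˢ (𝓝[≠] (0:ℝ))) (𝓝 (Q (e j, 0) (0, e k))) := by
      rw [Metric.tendsto_nhds]
      intro ε hε
      obtain ⟨δ, hδ, hb⟩ := hbound (ε / 2) (by positivity)
      have hevt : ∀ᶠ t in 𝓝[≠] (0:ℝ), t ≠ 0 ∧ |t| < δ := by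
        filter_upwards [self_mem_nhdsWithin,
          mem_nhdsWithin_of_mem_nhds (Metric.ball_mem_nhds (0:ℝ) hδ)] with t h1 h2
        refine ⟨h1, ?_⟩
        rwa [Metric.mem_ball, Real.dist_eq, sub_zero] at h2
      filter_upwards [hevt.prod_mk hevt] with ts hts
      rw [Real.dist_eq]
      calc |⟪q j ts.1, q k ts.2⟫ - Q (e j, 0) (0, e k)| ≤ ε / 2 :=
            hb j k ts.1 ts.2 hts.1.1 hts.2.1 hts.1.2 hts.2.2
        _ < ε := by linarith
    exact tendsto_nhds_unique h1 h2
  -- pairing with sections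
  have hFg : ∀ b ∈ U, ∀ j, ⟪F b, g j⟫ = Φ (b, x) ((0 : Fin n → ℝ), e j) := by
    intro b hb j
    have h1 : Tendsto (fun t => ⟪F b, q j t⟫) (𝓝[≠] (0:ℝ)) (𝓝 ⟪F b, g j⟫) :=
      tendsto_const_nhds.inner (hg j)
    have hσ : HasDerivAt (fun t : ℝ => Ψ (b, x + t • e j))
        (Φ (b, x) ((0 : Fin n → ℝ), e j)) 0 := by
      have hpath : HasDerivAt (fun t : ℝ => ((b, x + t • e j) : (Fin n → ℝ) × (Fin n → ℝ)))
          (((0 : Fin n → ℝ), e j)) 0 := by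
        apply HasDerivAt.prodMk (hasDerivAt_const 0 b)
        simpa using ((hasDerivAt_id (0:ℝ)).smul_const (e j)).const_add x
      have h0 : HasFDerivAt Ψ (Φ (b, x))
          ((fun t : ℝ => ((b, x + t • e j) : (Fin n → ℝ) × (Fin n → ℝ))) 0) := by
        simpa using hΨd (b, x) ⟨hb, hx⟩
      simpa [Function.comp_def] using h0.comp_hasDerivAt 0 hpath
    have hcont : Continuous fun t : ℝ => x + t • e j :=
      continuous_const.add (continuous_id.smul continuous_const)
    have hevU : ∀ᶠ t : ℝ in 𝓝 0, x + t • e j ∈ U :=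
      hcont.continuousAt.eventually_mem (by simpa using hU.mem_nhds hx)
    have h2 : Tendsto (fun t => ⟪F b, q j t⟫) (𝓝[≠] (0:ℝ))
        (𝓝 (Φ (b, x) ((0 : Fin n → ℝ), e j))) := by
      apply Tendsto.congr' ?_ hσ.tendsto_slope_zero
      filter_upwards [mem_nhdsWithin_of_mem_nhds hevU, self_mem_nhdsWithin] with t htU htne
      rw [hqdef]
      simp only [zero_add, zero_smul, add_zero, smul_eq_mul, inner_smul_right, inner_sub_right]
      rw [hΨF b hb _ htU, hΨF b hb x hx]
    exact tendsto_nhds_unique h1 h2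
  -- the candidate derivative
  have hsum_single : ∀ h : Fin n → ℝ, ∑ j, h j • e j = h := by
    intro h
    rw [he]
    ext i
    simp [Finset.sum_apply, Pi.single_apply, mul_ite]
  set Dlin : (Fin n → ℝ) →ₗ[ℝ] H :=
    { toFun := fun h => ∑ j, h j • g j
      map_add' := fun a b => by simp [add_smul, Finset.sum_add_distrib]
      map_smul' := fun c a => by simp [smul_smul, Finset.smul_sum] } with hDlin
  set D : (Fin n → ℝ) →L[ℝ] H := LinearMap.toContinuousLinearMap Dlin with hD
  have hDapply : ∀ h : Fin n → ℝ, D h = ∑ j, h j • g j := fun h => rfl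
  have hdecomp1 : ∀ h : Fin n → ℝ,
      ((h, (0 : Fin n → ℝ)) : (Fin n → ℝ) × (Fin n → ℝ)) =
        ∑ j, h j • ((e j, (0 : Fin n → ℝ)) : (Fin n → ℝ) × (Fin n → ℝ)) := by
    intro h
    rw [Prod.ext_iff]
    refine ⟨?_, ?_⟩
    · rw [Prod.fst_sum]
      have e1 : ∀ j ∈ Finset.univ, (h j • ((e j, (0 : Fin n → ℝ)) :
          (Fin n → ℝ) × (Fin n → ℝ))).1 = h j • e j := fun j _ => rfl
      rw [Finset.sum_congr rfl e1]
      exact (hsum_single h).symm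
    · rw [Prod.snd_sum]
      have e1 : ∀ j ∈ Finset.univ, (h j • ((e j, (0 : Fin n → ℝ)) :
          (Fin n → ℝ) × (Fin n → ℝ))).2 = 0 := fun j _ => smul_zero _
      rw [Finset.sum_congr rfl e1, Finset.sum_const_zero]
  have hdecomp2 : ∀ h : Fin n → ℝ,
      (((0 : Fin n → ℝ), h) : (Fin n → ℝ) × (Fin n → ℝ)) =
        ∑ j, h j • (((0 : Fin n → ℝ), e j) : (Fin n → ℝ) × (Fin n → ℝ)) := by
    intro h
    rw [Prod.ext_iff]
    refine ⟨?_, ?_⟩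
    · rw [Prod.fst_sum]
      have e1 : ∀ j ∈ Finset.univ, (h j • ((((0 : Fin n → ℝ), e j)) :
          (Fin n → ℝ) × (Fin n → ℝ))).1 = 0 := fun j _ => smul_zero _
      rw [Finset.sum_congr rfl e1, Finset.sum_const_zero]
    · rw [Prod.snd_sum]
      have e1 : ∀ j ∈ Finset.univ, (h j • ((((0 : Fin n → ℝ), e j)) :
          (Fin n → ℝ) × (Fin n → ℝ))).2 = h j • e j := fun j _ => rfl
      rw [Finset.sum_congr rfl e1]
      exact (hsum_single h).symm
  have hFD : ∀ b ∈ U, ∀ h : Fin n → ℝ, ⟪F b, D h⟫ = Φ (b, x) ((0 : Fin n → ℝ), h) := by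
    intro b hb h
    rw [hDapply, inner_sum]
    conv_rhs => rw [hdecomp2 h, _root_.map_sum]
    apply Finset.sum_congr rfl
    intro j _
    rw [real_inner_smul_right, hFg b hb j, _root_.map_smul, smul_eq_mul]
  have hDD : ∀ h : Fin n → ℝ,
      ⟪D h, D h⟫ = Q (h, (0 : Fin n → ℝ)) ((0 : Fin n → ℝ), h) := by
    intro h
    rw [hDapply, sum_inner]
    conv_rhs => rw [hdecomp1 h, _root_.map_sum, ContinuousLinearMap.sum_apply]
    apply Finset.sum_congr rfl
    intro j _
    rw [real_inner_smul_left, _root_.map_smul, ContinuousLinearMap.smul_apply, smul_eq_mul]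
    congr 1
    rw [inner_sum]
    conv_rhs => rw [hdecomp2 h, _root_.map_sum]
    apply Finset.sum_congr rfl
    intro k _
    rw [real_inner_smul_right, hgg j k, _root_.map_smul, smul_eq_mul]
  -- F is differentiable at x with derivative D
  have hmain : HasFDerivAt F D x := by
    rw [hasFDerivAt_iff_isLittleO_nhds_zero, Asymptotics.isLittleO_iff]
    intro c hc
    obtain ⟨δ, hδ, hball, hQb⟩ := hquant (c ^ 2 / 5) (by positivity)
    have hev1 : ∀ᶠ h : (Fin n → ℝ) in 𝓝 0, ‖h‖ < δ / 2 := by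
      filter_upwards [Metric.ball_mem_nhds (0 : Fin n → ℝ)
        (show (0:ℝ) < δ / 2 by positivity)] with h hh
      rwa [mem_ball_zero_iff] at hh
    filter_upwards [hev1] with h hh
    have hmem1 : ((x + h, x) : (Fin n → ℝ) × (Fin n → ℝ)) ∈ Metric.ball p δ := by
      rw [Metric.mem_ball, Prod.dist_eq, hp]
      have e1 : dist (x + h) x = ‖h‖ := by
        rw [dist_eq_norm]
        congr 1
        abel
      rw [e1, dist_self]
      calc max ‖h‖ 0 = ‖h‖ := max_eq_left (norm_nonneg h)
        _ < δ := by linarith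
    have hxh : x + h ∈ U := (hball hmem1).1
    have hA : ⟪F (x + h) - F x, D h⟫ =
        Φ (x + h, x) ((0 : Fin n → ℝ), h) - Φ (x, x) ((0 : Fin n → ℝ), h) := by
      rw [inner_sub_left, hFD _ hxh, hFD _ hx]
    have eAA : ⟪F (x + h) - F x, F (x + h) - F x⟫ =
        Ψ (x + h, x + h) - Ψ (x + h, x) - Ψ (x, x + h) + Ψ (x, x) := by
      simp only [inner_sub_left, inner_sub_right]
      rw [← hΨF _ hxh _ hxh, ← hΨF _ hxh _ hx, ← hΨF _ hx _ hxh, ← hΨF _ hx _ hx]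
      ring
    have expand : ‖F (x + h) - F x - D h‖ ^ 2 =
        (Ψ (x + h, x + h) - Ψ (x + h, x) - Ψ (x, x + h) + Ψ (x, x))
          - 2 * (Φ (x + h, x) ((0 : Fin n → ℝ), h) - Φ (x, x) ((0 : Fin n → ℝ), h))
          + Q (h, (0 : Fin n → ℝ)) ((0 : Fin n → ℝ), h) := by
      rw [← real_inner_self_eq_norm_sq, real_inner_sub_sub_self, eAA, hA, hDD]
      try ring
    have hd' : ∀ r ∈ Metric.ball p δ, HasFDerivAt Ψ (Φ r) r := fun r hr => hΨd r (hball hr)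
    have hnu : ‖((h, (0 : Fin n → ℝ)) : (Fin n → ℝ) × (Fin n → ℝ))‖ = ‖h‖ := by
      rw [Prod.norm_def]
      simp only [norm_zero]
      exact max_eq_left (norm_nonneg h)
    have hnv : ‖(((0 : Fin n → ℝ), h) : (Fin n → ℝ) × (Fin n → ℝ))‖ = ‖h‖ := by
      rw [Prod.norm_def]
      simp only [norm_zero]
      exact max_eq_right (norm_nonneg h)
    have hsumδ : ‖((h, (0 : Fin n → ℝ)) : (Fin n → ℝ) × (Fin n → ℝ))‖ +
        ‖(((0 : Fin n → ℝ), h) : (Fin n → ℝ) × (Fin n → ℝ))‖ < δ := by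
      rw [hnu, hnv]; linarith
    have hB1 := secondDiff_bound Ψ Φ Q p δ (c ^ 2 / 5) (by positivity) hd' hQb
      ((h, (0 : Fin n → ℝ))) (((0 : Fin n → ℝ), h)) hsumδ
    have hpuv : p + ((h, (0 : Fin n → ℝ)) : (Fin n → ℝ) × (Fin n → ℝ))
        + (((0 : Fin n → ℝ), h) : (Fin n → ℝ) × (Fin n → ℝ)) = (x + h, x + h) := by
      rw [hp]; ext <;> simp
    have hpu : p + ((h, (0 : Fin n → ℝ)) : (Fin n → ℝ) × (Fin n → ℝ)) = (x + h, x) := by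
      rw [hp]; ext <;> simp
    have hpv : p + (((0 : Fin n → ℝ), h) : (Fin n → ℝ) × (Fin n → ℝ)) = (x, x + h) := by
      rw [hp]; ext <;> simp
    rw [hpuv, hpu, hpv, hnu, hnv, hp] at hB1
    have hQvu : Q (((0 : Fin n → ℝ), h)) ((h, (0 : Fin n → ℝ))) =
        Q ((h, (0 : Fin n → ℝ))) (((0 : Fin n → ℝ), h)) := hQsymm _ _
    rw [hQvu] at hB1
    have e3 : c ^ 2 / 5 * ((2 * ‖h‖ + ‖h‖) * ‖h‖) = 3 * (c ^ 2 / 5) * ‖h‖ ^ 2 := by ring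
    rw [e3] at hB1
    have hQm := hQb _ hmem1
    have e2 : ((x + h, x) : (Fin n → ℝ) × (Fin n → ℝ)) - p = ((h, (0 : Fin n → ℝ))) := by
      rw [hp]; ext <;> simp
    rw [e2, hnu, hp] at hQm
    have hM : |Φ (x + h, x) ((0 : Fin n → ℝ), h) - Φ (x, x) ((0 : Fin n → ℝ), h)
        - Q ((h, (0 : Fin n → ℝ))) (((0 : Fin n → ℝ), h))| ≤ c ^ 2 / 5 * ‖h‖ ^ 2 := by
      have h1 : Φ (x + h, x) ((0 : Fin n → ℝ), h) - Φ (x, x) ((0 : Fin n → ℝ), h)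
          - Q ((h, (0 : Fin n → ℝ))) (((0 : Fin n → ℝ), h)) =
          (Φ (x + h, x) - Φ (x, x) - Q ((h, (0 : Fin n → ℝ))))
            (((0 : Fin n → ℝ), h)) := by
        simp [ContinuousLinearMap.sub_apply]
      rw [h1, ← Real.norm_eq_abs]
      calc ‖(Φ (x + h, x) - Φ (x, x) - Q ((h, (0 : Fin n → ℝ))))
            (((0 : Fin n → ℝ), h))‖
          ≤ ‖Φ (x + h, x) - Φ (x, x) - Q ((h, (0 : Fin n → ℝ)))‖ *
            ‖(((0 : Fin n → ℝ), h) : (Fin n → ℝ) × (Fin n → ℝ))‖ :=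
            ContinuousLinearMap.le_opNorm _ _
        _ ≤ c ^ 2 / 5 * ‖h‖ * ‖h‖ := by
            rw [hnv]
            exact mul_le_mul_of_nonneg_right hQm (norm_nonneg h)
        _ = c ^ 2 / 5 * ‖h‖ ^ 2 := by ring
    have habs : ‖F (x + h) - F x - D h‖ ^ 2 ≤ c ^ 2 * ‖h‖ ^ 2 := by
      rw [expand]
      have hb1 := abs_le.1 hB1
      have hm1 := abs_le.1 hM
      linarith [hb1.1, hb1.2, hm1.1, hm1.2]
    calc ‖F (x + h) - F x - D h‖ = Real.sqrt (‖F (x + h) - F x - D h‖ ^ 2) :=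
          (Real.sqrt_sq (norm_nonneg _)).symm
      _ ≤ Real.sqrt (c ^ 2 * ‖h‖ ^ 2) := Real.sqrt_le_sqrt habs
      _ = c * ‖h‖ := by
          rw [show c ^ 2 * ‖h‖ ^ 2 = (c * ‖h‖) ^ 2 by ring,
            Real.sqrt_sq (by positivity)]
  exact hmain.differentiableAt

/-- **Derivative reproducing property in a vector-valued RKHS** (Micheli–Glaunès).
Let `H` be an `ℝⁿ`-valued RKHS on an open set `X ⊆ ℝⁿ`, realized via an injective linear
embedding `ι` into functions, with operator-valued reproducing kernel `K` of class `C²` on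
`X × X` (sections `Ksec x y` represent `z ↦ K(z,x)y`, and the reproducing property holds).
Then for every `x ∈ X`, `y ∈ ℝⁿ` and coordinate `j`, the derivative section
`z ↦ (∂K(z,s)/∂s^j |_{s=x}) y` belongs to `H`, every `f ∈ H` is differentiable at `x`, and
`⟨∂(ι f)(x)/∂x^j, y⟩ = ⟪f, ∂_j K_x y⟫_H`. -/
theorem vector_rkhs_derivative_reproducing
    {n : ℕ} (X : Set (Fin n → ℝ)) (hX : IsOpen X)
    (H : Type) [NormedAddCommGroup H] [InnerProductSpace ℝ H] [CompleteSpace H]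
    (ι : H →ₗ[ℝ] ((Fin n → ℝ) → (Fin n → ℝ))) (hι : Function.Injective ι)
    (K : (Fin n → ℝ) → (Fin n → ℝ) → Matrix (Fin n) (Fin n) ℝ)
    (hK : ContDiffOn ℝ 2 (fun p : (Fin n → ℝ) × (Fin n → ℝ) => K p.1 p.2) (X ×ˢ X))
    (hKsym : ∀ x ∈ X, ∀ z ∈ X, (K x z)ᵀ = K z x)
    (Ksec : (Fin n → ℝ) → (Fin n → ℝ) → H)
    (hsec : ∀ x ∈ X, ∀ y : Fin n → ℝ, ∀ z ∈ X, ι (Ksec x y) z = (K z x).mulVec y)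
    (hrep : ∀ f : H, ∀ x ∈ X, ∀ y : Fin n → ℝ, ι f x ⬝ᵥ y = ⟪f, Ksec x y⟫) :
    ∀ x ∈ X, ∀ y : Fin n → ℝ, ∀ j : Fin n,
      ∃ g : H,
        (∀ z ∈ X, ι g z = (fderiv ℝ (fun s => K z s) x (Pi.single j 1)).mulVec y) ∧
        ∀ f : H, DifferentiableAt ℝ (ι f) x ∧
          fderiv ℝ (ι f) x (Pi.single j 1) ⬝ᵥ y = ⟪f, g⟫ := by
  intro x hx y j
  classical
  -- continuous linear functionals on matrices
  have matLin : ∀ y' w : Fin n → ℝ, ∃ L : Matrix (Fin n) (Fin n) ℝ →L[ℝ] ℝ,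
      ∀ M : Matrix (Fin n) (Fin n) ℝ, L M = (M.mulVec y') ⬝ᵥ w := by
    intro y' w
    refine ⟨LinearMap.toContinuousLinearMap
      { toFun := fun M : Matrix (Fin n) (Fin n) ℝ => (M.mulVec y') ⬝ᵥ w
        map_add' := fun M N => by
          simp [Matrix.add_mulVec, add_dotProduct]
        map_smul' := fun c M => by
          simp [Matrix.smul_mulVec, smul_dotProduct] }, fun M => rfl⟩
  -- sections of the kernel are differentiable in the second variable
  have hKz : ∀ z ∈ X, DifferentiableAt ℝ (fun s => K z s) x := by
    intro z hz
    have h1 : ContDiffOn ℝ 2 (fun s => K z s) X := by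
      have h2 : ContDiffOn ℝ 2 (fun s : Fin n → ℝ => ((z, s) : _ × _)) X :=
        (ContDiff.prodMk contDiff_const contDiff_id).contDiffOn
      exact hK.comp h2 (fun s hs => ⟨hz, hs⟩)
    exact (h1.contDiffAt (hX.mem_nhds hx)).differentiableAt (by norm_num)
  -- the feature maps a ↦ Ksec a y' are differentiable at x
  have hFdiff : ∀ y' : Fin n → ℝ, DifferentiableAt ℝ (fun a => Ksec a y') x := by
    intro y'
    obtain ⟨L, hL⟩ := matLin y' y'
    apply differentiableAt_of_inner_contDiffOn (fun a => Ksec a y')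
      (fun pr : (Fin n → ℝ) × (Fin n → ℝ) => L (K pr.2 pr.1)) X hX x hx
    · intro a ha b hb
      rw [hL, ← hsec a ha y' b hb, hrep (Ksec a y') b hb y']
    · have hswap : ContDiffOn ℝ 2
          (fun pr : (Fin n → ℝ) × (Fin n → ℝ) => K pr.2 pr.1) (X ×ˢ X) := by
        have h2 : ContDiffOn ℝ 2
            (fun pr : (Fin n → ℝ) × (Fin n → ℝ) => (pr.2, pr.1)) (X ×ˢ X) :=
          (ContDiff.prodMk contDiff_snd contDiff_fst).contDiffOn
        exact hK.comp h2 (fun pr hpr => ⟨hpr.2, hpr.1⟩)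
      exact L.contDiff.comp_contDiffOn hswap
  -- the derivative section
  refine ⟨fderiv ℝ (fun a => Ksec a y) x (Pi.single j 1), ?_, ?_⟩
  · -- (a) the section of g is the derivative of the kernel
    intro z hz
    funext i
    set w : Fin n → ℝ := Pi.single i 1 with hw
    obtain ⟨L, hL⟩ := matLin y w
    have hφ1 : HasFDerivAt (fun a => ⟪Ksec z w, Ksec a y⟫)
        ((innerSL ℝ (Ksec z w)).comp (fderiv ℝ (fun a => Ksec a y) x)) x :=
      ((innerSL ℝ (Ksec z w)).hasFDerivAt).comp x (hFdiff y).hasFDerivAt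
    have hψ : HasFDerivAt (fun a => L (K z a))
        (L.comp (fderiv ℝ (fun s => K z s) x)) x :=
      (L.hasFDerivAt).comp x (hKz z hz).hasFDerivAt
    have hevEq : (fun a => ⟪Ksec z w, Ksec a y⟫) =ᶠ[𝓝 x] fun a => L (K z a) := by
      filter_upwards [hX.eventually_mem hx] with a ha
      rw [hL, real_inner_comm, ← hrep (Ksec a y) z hz w, hsec a ha y z hz]
    have hφ2 : HasFDerivAt (fun a => ⟪Ksec z w, Ksec a y⟫)
        (L.comp (fderiv ℝ (fun s => K z s) x)) x :=
      hψ.congr_of_eventuallyEq hevEq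
    have huniq := hφ1.unique hφ2
    have h3 : ⟪Ksec z w, fderiv ℝ (fun a => Ksec a y) x (Pi.single j 1)⟫ =
        L (fderiv ℝ (fun s => K z s) x (Pi.single j 1)) := by
      have := congrArg (fun (T : (Fin n → ℝ) →L[ℝ] ℝ) => T (Pi.single j 1)) huniq
      simpa using this
    calc ι (fderiv ℝ (fun a => Ksec a y) x (Pi.single j 1)) z i
        = ι (fderiv ℝ (fun a => Ksec a y) x (Pi.single j 1)) z ⬝ᵥ w := by
          rw [hw, dotProduct_single, mul_one]
      _ = ⟪fderiv ℝ (fun a => Ksec a y) x (Pi.single j 1), Ksec z w⟫ :=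
          hrep _ z hz w
      _ = ⟪Ksec z w, fderiv ℝ (fun a => Ksec a y) x (Pi.single j 1)⟫ :=
          real_inner_comm _ _
      _ = L (fderiv ℝ (fun s => K z s) x (Pi.single j 1)) := h3
      _ = ((fderiv ℝ (fun s => K z s) x (Pi.single j 1)).mulVec y) ⬝ᵥ w := hL _
      _ = (fderiv ℝ (fun s => K z s) x (Pi.single j 1)).mulVec y i := by
          rw [hw, dotProduct_single, mul_one]
  · -- (b) differentiability and the derivative reproducing property
    intro f
    have hcoord : ∀ i : Fin n, DifferentiableAt ℝ (fun a => ι f a i) x := by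
      intro i
      have hev : (fun a => ι f a i) =ᶠ[𝓝 x] fun a => ⟪f, Ksec a (Pi.single i 1)⟫ := by
        filter_upwards [hX.eventually_mem hx] with a ha
        rw [← hrep f a ha (Pi.single i 1), dotProduct_single, mul_one]
      rw [hev.differentiableAt_iff]
      exact ((innerSL ℝ f).differentiable.differentiableAt).comp x
        (hFdiff (Pi.single i 1))
    have hdiff : DifferentiableAt ℝ (ι f) x := differentiableAt_pi.2 hcoord
    refine ⟨hdiff, ?_⟩
    -- the dot product functional
    obtain ⟨Ldot, hLdot⟩ : ∃ L : (Fin n → ℝ) →L[ℝ] ℝ, ∀ v, L v = v ⬝ᵥ y :=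
      ⟨LinearMap.toContinuousLinearMap
        { toFun := fun v : Fin n → ℝ => v ⬝ᵥ y
          map_add' := fun a b => by simp [add_dotProduct]
          map_smul' := fun c a => by simp [smul_dotProduct] }, fun v => rfl⟩
    have h1 : HasFDerivAt (fun a => Ldot (ι f a)) (Ldot.comp (fderiv ℝ (ι f) x)) x :=
      Ldot.hasFDerivAt.comp x hdiff.hasFDerivAt
    have h2 : HasFDerivAt (fun a => ⟪f, Ksec a y⟫)
        ((innerSL ℝ f).comp (fderiv ℝ (fun a => Ksec a y) x)) x :=
      ((innerSL ℝ f).hasFDerivAt).comp x (hFdiff y).hasFDerivAt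
    have hev : (fun a => ⟪f, Ksec a y⟫) =ᶠ[𝓝 x] fun a => Ldot (ι f a) := by
      filter_upwards [hX.eventually_mem hx] with a ha
      rw [hLdot, hrep f a ha y]
    have h3 : HasFDerivAt (fun a => Ldot (ι f a))
        ((innerSL ℝ f).comp (fderiv ℝ (fun a => Ksec a y) x)) x :=
      h2.congr_of_eventuallyEq hev.symm
    have huniq := h1.unique h3
    have h4 := congrArg (fun (T : (Fin n → ℝ) →L[ℝ] ℝ) => T (Pi.single j 1)) huniq
    simp only [ContinuousLinearMap.comp_apply] at h4
    rw [hLdot] at h4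
    rw [h4]
    simp [innerSL_apply_apply]
end

section
/- (Representer Theorem for f, B) Let 𝒳 ⊆ ℝⁿ be open, let H_K^f and H_K^B be ℝⁿ-valued reproducing kernel Hilbert spaces on 𝒳 with C² reproducing kernels K^f and K^B (satisfying the reproducing and derivative reproducing properties), and suppose every g ∈ H_K^B has g^j(x) = 0 for j = 1,…,n−m and all x. Given data (x_i, u_i, ẋ_i), i = 1,…,N, constraint points X_c = {x₁,…,x_{N_c}} ⊇ {x₁,…,x_N}, μ_f, μ_b > 0, λ > 0, and a fixed continuously differentiable symmetric-matrix-valued W : 𝒳 → ℝ^{n×n}, consider minimizing J_d(f, B) = Σ_{i=1}^{N} ‖ f(x_i) + Σ_j u_i^j b_j(x_i) − ẋ_i ‖² + μ_f‖f‖²_{H_K^f} + μ_b Σ_j ‖b_j‖²_{H_K^B} over f ∈ H_K^f, b₁,…,b_m ∈ H_K^B, subject to ℱ_λ(x_i; f, W) ≼ 0 for every x_i ∈ X_c, where ℱ_λ(x; f, W) = B_⊥ᵀ( −∂_f W(x) + (∂f(x)/∂x)W(x) + W(x)(∂f(x)/∂x)ᵀ + 2λ W(x) ) B_⊥ with B_⊥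 = [I_{n−m}; 0_{m×(n−m)}]. If the feasible set is nonempty, then there exist unique minimizers f*, b₁*,…,b_m*, and they satisfy f* ∈ V_f and b_j* ∈ V_B for all j, where V_f = { Σ_{i=1}^{N_c} K^f_{x_i} a_i + Σ_{i=1}^{N_c} Σ_{p=1}^{n} ∂_p K^f_{x_i} a'_{ip} : a_i, a'_{ip} ∈ ℝⁿ } and V_B is defined analogously with kernel K^B. -/
open Matrix
open scoped RealInnerProductSpace

attribute [local instance] Matrix.normedAddCommGroup Matrix.normedSpace

/-- The stabilizability matrix
`ℱ_λ(x; g, W) = B_⊥ᵀ(−∂_g W + (∂g/∂x)W + W(∂g/∂x)ᵀ + 2λW)B_⊥`. -/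
noncomputable def Fstab {n : ℕ} (m : ℕ) (lam : ℝ)
    (W : (Fin n → ℝ) → Matrix (Fin n) (Fin n) ℝ)
    (g : (Fin n → ℝ) → (Fin n → ℝ)) (x : Fin n → ℝ) :
    Matrix (Fin (n - m)) (Fin (n - m)) ℝ :=
  (Bperp n m)ᵀ *
    (-(lieDerivMatrix W (g x) x) + jacobian g x * W x + W x * (jacobian g x)ᵀ
      + (2 * lam) • W x) * Bperp n m

/-- The regularized dynamics-fitting loss `J_d`. -/
noncomputable def dynLoss {n m N : ℕ} {Hf HB : Type}
    [NormedAddCommGroup Hf] [InnerProductSpace ℝ Hf]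
    [NormedAddCommGroup HB] [InnerProductSpace ℝ HB]
    (ιf : Hf →ₗ[ℝ] ((Fin n → ℝ) → (Fin n → ℝ)))
    (ιB : HB →ₗ[ℝ] ((Fin n → ℝ) → (Fin n → ℝ)))
    (xd : Fin N → Fin n → ℝ) (ud : Fin N → Fin m → ℝ) (xdotd : Fin N → Fin n → ℝ)
    (μf μb : ℝ) (f : Hf) (b : Fin m → HB) : ℝ :=
  (∑ i : Fin N,
    ((ιf f (xd i) + (∑ j : Fin m, ud i j • ιB (b j) (xd i)) - xdotd i) ⬝ᵥ
     (ιf f (xd i) + (∑ j : Fin m, ud i j • ιB (b j) (xd i)) - xdotd i)))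
  + μf * ‖f‖ ^ 2 + μb * ∑ j : Fin m, ‖b j‖ ^ 2

lemma dot_sq_midpoint {n : ℕ} (a b : Fin n → ℝ) :
    (((1:ℝ)/2) • (a + b)) ⬝ᵥ (((1:ℝ)/2) • (a + b)) ≤ (a ⬝ᵥ a + b ⬝ᵥ b) / 2 := by
  simp only [dotProduct, Pi.smul_apply, Pi.add_apply, smul_eq_mul]
  rw [← Finset.sum_add_distrib, Finset.sum_div]
  apply Finset.sum_le_sum
  intro i _
  nlinarith [sq_nonneg (a i - b i)]

lemma dot_self_nonneg' {n : ℕ} (a : Fin n → ℝ) : 0 ≤ a ⬝ᵥ a :=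
  Finset.sum_nonneg fun i _ => mul_self_nonneg _

lemma norm_sq_midpoint {E : Type*} [NormedAddCommGroup E] [InnerProductSpace ℝ E] (a b : E) :
    ‖((1:ℝ)/2) • (a + b)‖ ^ 2 = (‖a‖ ^ 2 + ‖b‖ ^ 2) / 2 - ‖a - b‖ ^ 2 / 4 := by
  have h := parallelogram_law_with_norm ℝ a b
  have h2 : ‖((1:ℝ)/2) • (a + b)‖ = (1/2) * ‖a + b‖ := by
    rw [norm_smul]; simp
  rw [h2]
  simp only [pow_two] at *
  nlinarith [h]

lemma Fstab_congr {n : ℕ} (m : ℕ) (lam : ℝ) (W : (Fin n → ℝ) → Matrix (Fin n) (Fin n) ℝ)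
    (g₁ g₂ : (Fin n → ℝ) → (Fin n → ℝ)) (x : Fin n → ℝ)
    (h1 : g₁ x = g₂ x) (h2 : jacobian g₁ x = jacobian g₂ x) :
    Fstab m lam W g₁ x = Fstab m lam W g₂ x := by
  unfold Fstab; rw [h1, h2]

lemma jacobian_midpoint {n : ℕ} (g₁ g₂ : (Fin n → ℝ) → (Fin n → ℝ)) (x : Fin n → ℝ)
    (h₁ : DifferentiableAt ℝ g₁ x) (h₂ : DifferentiableAt ℝ g₂ x) :
    jacobian (fun y => ((1:ℝ)/2) • (g₁ y + g₂ y)) x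
      = ((1:ℝ)/2) • (jacobian g₁ x + jacobian g₂ x) := by
  have hf : fderiv ℝ (fun y => ((1:ℝ)/2) • (g₁ y + g₂ y)) x
      = ((1:ℝ)/2) • (fderiv ℝ (fun y => g₁ y + g₂ y) x) := by
    exact fderiv_fun_const_smul (h₁.add h₂) _
  have hg : fderiv ℝ (fun y => g₁ y + g₂ y) x = fderiv ℝ g₁ x + fderiv ℝ g₂ x :=
    fderiv_add h₁ h₂
  ext i j
  simp only [jacobian, Matrix.of_apply, Matrix.smul_apply, Matrix.add_apply]
  rw [hf, hg]
  simp [smul_eq_mul, mul_add]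

lemma lieDeriv_midpoint {n : ℕ} (W : (Fin n → ℝ) → Matrix (Fin n) (Fin n) ℝ)
    (v₁ v₂ : Fin n → ℝ) (x : Fin n → ℝ) :
    lieDerivMatrix W (((1:ℝ)/2) • (v₁ + v₂)) x
      = ((1:ℝ)/2) • (lieDerivMatrix W v₁ x + lieDerivMatrix W v₂ x) := by
  ext i j
  simp only [lieDerivMatrix, Matrix.of_apply, Matrix.smul_apply, Matrix.add_apply, map_add,
    _root_.map_smul, smul_eq_mul, Pi.add_apply, Pi.smul_apply, mul_add]

lemma Fstab_midpoint {n : ℕ} (m : ℕ) (lam : ℝ) (W : (Fin n → ℝ) → Matrix (Fin n) (Fin n) ℝ)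
    (g₁ g₂ : (Fin n → ℝ) → (Fin n → ℝ)) (x : Fin n → ℝ)
    (h₁ : DifferentiableAt ℝ g₁ x) (h₂ : DifferentiableAt ℝ g₂ x) :
    Fstab m lam W (fun y => ((1:ℝ)/2) • (g₁ y + g₂ y)) x
      = ((1:ℝ)/2) • (Fstab m lam W g₁ x + Fstab m lam W g₂ x) := by
  unfold Fstab
  have hv : (fun y => ((1:ℝ)/2) • (g₁ y + g₂ y)) x = ((1:ℝ)/2) • (g₁ x + g₂ x) := rfl
  rw [hv, lieDeriv_midpoint, jacobian_midpoint g₁ g₂ x h₁ h₂]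
  have hinner : -(((1:ℝ)/2) • (lieDerivMatrix W (g₁ x) x + lieDerivMatrix W (g₂ x) x))
      + (((1:ℝ)/2) • (jacobian g₁ x + jacobian g₂ x)) * W x
      + W x * (((1:ℝ)/2) • (jacobian g₁ x + jacobian g₂ x))ᵀ + (2*lam) • W x
      = ((1:ℝ)/2) • ((-(lieDerivMatrix W (g₁ x) x) + jacobian g₁ x * W x
          + W x * (jacobian g₁ x)ᵀ + (2*lam) • W x)
        + (-(lieDerivMatrix W (g₂ x) x) + jacobian g₂ x * W x
          + W x * (jacobian g₂ x)ᵀ + (2*lam) • W x)) := by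
    simp only [Matrix.smul_mul, Matrix.add_mul, Matrix.mul_smul, Matrix.mul_add,
      Matrix.transpose_smul, Matrix.transpose_add]
    module
  rw [hinner]
  simp only [Matrix.mul_smul, Matrix.smul_mul, Matrix.mul_add, Matrix.add_mul, smul_add]

private lemma sum_dot_midpoint' {n N : ℕ} (R₁ R₂ : Fin N → Fin n → ℝ) : True := trivial

private lemma dynLoss_midpoint {n m N : ℕ} {Hf HB : Type}
    [NormedAddCommGroup Hf] [InnerProductSpace ℝ Hf]
    [NormedAddCommGroup HB] [InnerProductSpace ℝ HB]
    (ιf : Hf →ₗ[ℝ] ((Fin n → ℝ) → (Fin n → ℝ)))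
    (ιB : HB →ₗ[ℝ] ((Fin n → ℝ) → (Fin n → ℝ)))
    (xd : Fin N → Fin n → ℝ) (ud : Fin N → Fin m → ℝ) (xdotd : Fin N → Fin n → ℝ)
    (μf μb : ℝ) (f₁ f₂ : Hf) (b₁ b₂ : Fin m → HB) (bmid : Fin m → HB)
    (hbmid : ∀ j, bmid j = ((1:ℝ)/2) • (b₁ j + b₂ j)) :
    dynLoss ιf ιB xd ud xdotd μf μb (((1:ℝ)/2) • (f₁ + f₂)) bmid
      ≤ (dynLoss ιf ιB xd ud xdotd μf μb f₁ b₁ + dynLoss ιf ιB xd ud xdotd μf μb f₂ b₂) / 2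
        - μf/4 * ‖f₁ - f₂‖^2 - μb/4 * ∑ j : Fin m, ‖b₁ j - b₂ j‖^2 := by
  unfold dynLoss
  simp only [hbmid]
  have hrmid : ∀ i : Fin N,
      ιf (((1:ℝ)/2) • (f₁ + f₂)) (xd i)
        + (∑ j : Fin m, ud i j • ιB (((1:ℝ)/2) • (b₁ j + b₂ j)) (xd i)) - xdotd i
      = ((1:ℝ)/2) • ((ιf f₁ (xd i) + (∑ j : Fin m, ud i j • ιB (b₁ j) (xd i)) - xdotd i)
          + (ιf f₂ (xd i) + (∑ j : Fin m, ud i j • ιB (b₂ j) (xd i)) - xdotd i)) := by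
    intro i
    have h1 : ιf (((1:ℝ)/2) • (f₁ + f₂)) (xd i)
        = ((1:ℝ)/2) • (ιf f₁ (xd i) + ιf f₂ (xd i)) := by
      simp [map_add, _root_.map_smul]
    have h3 : (∑ j : Fin m, ud i j • ιB (((1:ℝ)/2) • (b₁ j + b₂ j)) (xd i))
        = ((1:ℝ)/2) • ((∑ j : Fin m, ud i j • ιB (b₁ j) (xd i))
            + (∑ j : Fin m, ud i j • ιB (b₂ j) (xd i))) := by
      rw [smul_add, Finset.smul_sum, Finset.smul_sum, ← Finset.sum_add_distrib]
      refine Finset.sum_congr rfl fun j _ => ?_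
      funext p
      simp [map_add, _root_.map_smul, Pi.smul_apply, Pi.add_apply, smul_eq_mul]
      ring
    rw [h1, h3]
    module
  simp only [hrmid]
  have hd : ∑ i : Fin N,
      ((((1:ℝ)/2) • ((ιf f₁ (xd i) + (∑ j : Fin m, ud i j • ιB (b₁ j) (xd i)) - xdotd i)
          + (ιf f₂ (xd i) + (∑ j : Fin m, ud i j • ιB (b₂ j) (xd i)) - xdotd i))) ⬝ᵥ
       (((1:ℝ)/2) • ((ιf f₁ (xd i) + (∑ j : Fin m, ud i j • ιB (b₁ j) (xd i)) - xdotd i)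
          + (ιf f₂ (xd i) + (∑ j : Fin m, ud i j • ιB (b₂ j) (xd i)) - xdotd i))))
      ≤ ((∑ i : Fin N,
          ((ιf f₁ (xd i) + (∑ j : Fin m, ud i j • ιB (b₁ j) (xd i)) - xdotd i) ⬝ᵥ
           (ιf f₁ (xd i) + (∑ j : Fin m, ud i j • ιB (b₁ j) (xd i)) - xdotd i)))
        + ∑ i : Fin N,
          ((ιf f₂ (xd i) + (∑ j : Fin m, ud i j • ιB (b₂ j) (xd i)) - xdotd i) ⬝ᵥ
           (ιf f₂ (xd i) + (∑ j : Fin m, ud i j • ιB (b₂ j) (xd i)) - xdotd i)))/2 := by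
    rw [← Finset.sum_add_distrib, Finset.sum_div]
    exact Finset.sum_le_sum fun i _ => dot_sq_midpoint _ _
  have hnf : μf * ‖((1:ℝ)/2) • (f₁ + f₂)‖^2
      = μf * ‖f₁‖^2/2 + μf * ‖f₂‖^2/2 - μf * ‖f₁ - f₂‖^2/4 := by
    rw [norm_sq_midpoint]; ring
  have hnb0 : ∑ j : Fin m, ‖((1:ℝ)/2) • (b₁ j + b₂ j)‖^2
      = ((∑ j : Fin m, ‖b₁ j‖^2) + ∑ j : Fin m, ‖b₂ j‖^2)/2
        - (∑ j : Fin m, ‖b₁ j - b₂ j‖^2)/4 := by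
    rw [← Finset.sum_add_distrib, Finset.sum_div, Finset.sum_div, ← Finset.sum_sub_distrib]
    exact Finset.sum_congr rfl fun j _ => norm_sq_midpoint _ _
  have hnb : μb * ∑ j : Fin m, ‖((1:ℝ)/2) • (b₁ j + b₂ j)‖^2
      = μb * (∑ j : Fin m, ‖b₁ j‖^2)/2 + μb * (∑ j : Fin m, ‖b₂ j‖^2)/2
        - μb * (∑ j : Fin m, ‖b₁ j - b₂ j‖^2)/4 := by
    rw [hnb0]; ring
  linarith [hd, hnf, hnb]
set_option maxHeartbeats 1600000 in
/-- **Representer theorem for the dynamics sub-problem.** Minimizing the regularized loss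
`J_d` over `f ∈ H_K^f`, `b_j ∈ H_K^B` subject to the pointwise-relaxed stabilizability LMIs
`ℱ_λ(x_i; f, W) ≼ 0` at the constraint points (with `W` fixed, and `H_K^B` consisting of
functions whose first `n−m` components vanish) admits, if feasible, unique minimizers
`f*, b_j*`, and these lie in the subspaces spanned by kernel sections and derivative-of-kernel
sections at the constraint points. -/
theorem representer_theorem_dynamics
    {n m N Nc : ℕ} (hm : m ≤ n) (X : Set (Fin n → ℝ)) (hX : IsOpen X)
    (Hf HB : Type)
    [NormedAddCommGroup Hf] [InnerProductSpace ℝ Hf] [CompleteSpace Hf]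
    [NormedAddCommGroup HB] [InnerProductSpace ℝ HB] [CompleteSpace HB]
    (ιf : Hf →ₗ[ℝ] ((Fin n → ℝ) → (Fin n → ℝ))) (hιf : Function.Injective ιf)
    (ιB : HB →ₗ[ℝ] ((Fin n → ℝ) → (Fin n → ℝ))) (hιB : Function.Injective ιB)
    -- sparsity of `H_K^B`: first `n−m` components vanish
    (hsparse : ∀ g : HB, ∀ x : Fin n → ℝ, ∀ j : Fin n, (j : ℕ) < n - m → ιB g x j = 0)
    (Kf KB : (Fin n → ℝ) → (Fin n → ℝ) → Matrix (Fin n) (Fin n) ℝ)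
    (hKf : ContDiffOn ℝ 2 (fun p : (Fin n → ℝ) × (Fin n → ℝ) => Kf p.1 p.2) (X ×ˢ X))
    (hKB : ContDiffOn ℝ 2 (fun p : (Fin n → ℝ) × (Fin n → ℝ) => KB p.1 p.2) (X ×ˢ X))
    -- sections, reproducing and derivative-reproducing properties for `H_K^f`
    (Ksecf : (Fin n → ℝ) → (Fin n → ℝ) → Hf)
    (hsecf : ∀ x ∈ X, ∀ y : Fin n → ℝ, ∀ z ∈ X, ιf (Ksecf x y) z = (Kf z x).mulVec y)
    (hrepf : ∀ f : Hf, ∀ x ∈ X, ∀ y : Fin n → ℝ, ιf f x ⬝ᵥ y = ⟪f, Ksecf x y⟫)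
    (Kderf : (Fin n → ℝ) → Fin n → (Fin n → ℝ) → Hf)
    (hdersecf : ∀ x ∈ X, ∀ p : Fin n, ∀ y : Fin n → ℝ, ∀ z ∈ X,
      ιf (Kderf x p y) z = (fderiv ℝ (fun s => Kf z s) x (Pi.single p 1)).mulVec y)
    (hdifff : ∀ f : Hf, ∀ x ∈ X, DifferentiableAt ℝ (ιf f) x)
    (hderrepf : ∀ f : Hf, ∀ x ∈ X, ∀ p : Fin n, ∀ y : Fin n → ℝ,
      fderiv ℝ (ιf f) x (Pi.single p 1) ⬝ᵥ y = ⟪f, Kderf x p y⟫)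
    -- sections, reproducing and derivative-reproducing properties for `H_K^B`
    (KsecB : (Fin n → ℝ) → (Fin n → ℝ) → HB)
    (hsecB : ∀ x ∈ X, ∀ y : Fin n → ℝ, ∀ z ∈ X, ιB (KsecB x y) z = (KB z x).mulVec y)
    (hrepB : ∀ g : HB, ∀ x ∈ X, ∀ y : Fin n → ℝ, ιB g x ⬝ᵥ y = ⟪g, KsecB x y⟫)
    (KderB : (Fin n → ℝ) → Fin n → (Fin n → ℝ) → HB)
    (hdersecB : ∀ x ∈ X, ∀ p : Fin n, ∀ y : Fin n → ℝ, ∀ z ∈ X,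
      ιB (KderB x p y) z = (fderiv ℝ (fun s => KB z s) x (Pi.single p 1)).mulVec y)
    (hdiffB : ∀ g : HB, ∀ x ∈ X, DifferentiableAt ℝ (ιB g) x)
    (hderrepB : ∀ g : HB, ∀ x ∈ X, ∀ p : Fin n, ∀ y : Fin n → ℝ,
      fderiv ℝ (ιB g) x (Pi.single p 1) ⬝ᵥ y = ⟪g, KderB x p y⟫)
    -- data and constraint points
    (xd : Fin N → Fin n → ℝ) (ud : Fin N → Fin m → ℝ) (xdotd : Fin N → Fin n → ℝ)
    (xs : Fin Nc → Fin n → ℝ) (hxs : ∀ k, xs k ∈ X)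
    (hsub : ∀ i : Fin N, ∃ k : Fin Nc, xd i = xs k)
    (μf μb lam : ℝ) (hμf : 0 < μf) (hμb : 0 < μb) (hlam : 0 < lam)
    -- the fixed dual metric
    (W : (Fin n → ℝ) → Matrix (Fin n) (Fin n) ℝ)
    (hW : ContDiffOn ℝ 1 W X) (hWsymm : ∀ x ∈ X, (W x).IsSymm)
    -- the spanned subspaces
    (Vf : Submodule ℝ Hf) (VB : Submodule ℝ HB)
    (hVf : Vf = Submodule.span ℝ
      ({h | ∃ (k : Fin Nc) (y : Fin n → ℝ), h = Ksecf (xs k) y} ∪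
       {h | ∃ (k : Fin Nc) (p : Fin n) (y : Fin n → ℝ), h = Kderf (xs k) p y}))
    (hVB : VB = Submodule.span ℝ
      ({h | ∃ (k : Fin Nc) (y : Fin n → ℝ), h = KsecB (xs k) y} ∪
       {h | ∃ (k : Fin Nc) (p : Fin n) (y : Fin n → ℝ), h = KderB (xs k) p y}))
    -- feasibility predicate: the pointwise-relaxed stabilizability LMIs
    (Feas : Hf → Prop)
    (hFeas : ∀ f : Hf, Feas f ↔ ∀ k : Fin Nc, ∀ v : Fin (n - m) → ℝ,
      v ⬝ᵥ (Fstab m lam W (ιf f) (xs k)).mulVec v ≤ 0)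
    -- the feasible set is nonempty
    (hne : ∃ f : Hf, Feas f) :
    ∃ (fstar : Hf) (bstar : Fin m → HB),
      (Feas fstar ∧
        ∀ (f : Hf) (b : Fin m → HB), Feas f →
          dynLoss ιf ιB xd ud xdotd μf μb fstar bstar ≤ dynLoss ιf ιB xd ud xdotd μf μb f b)
      ∧ fstar ∈ Vf ∧ (∀ j, bstar j ∈ VB)
      ∧ ∀ (f' : Hf) (b' : Fin m → HB),
          (Feas f' ∧ ∀ (f : Hf) (b : Fin m → HB), Feas f →
            dynLoss ιf ιB xd ud xdotd μf μb f' b' ≤ dynLoss ιf ιB xd ud xdotd μf μb f b) →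
          f' = fstar ∧ b' = bstar := by
  classical
  set Jp := dynLoss ιf ιB xd ud xdotd μf μb with hJp
  have hxdX : ∀ i, xd i ∈ X := fun i => by
    obtain ⟨k, hk⟩ := hsub i; rw [hk]; exact hxs k
  -- component formulas
  have hval : ∀ (f : Hf) (x : Fin n → ℝ), x ∈ X → ∀ p, ιf f x p = ⟪f, Ksecf x (Pi.single p 1)⟫ := by
    intro f x hx p
    have h := hrepf f x hx (Pi.single p 1)
    rwa [dotProduct_single, mul_one] at h
  have hvalB : ∀ (g : HB) (x : Fin n → ℝ), x ∈ X → ∀ p, ιB g x p = ⟪g, KsecB x (Pi.single p 1)⟫ := by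
    intro g x hx p
    have h := hrepB g x hx (Pi.single p 1)
    rwa [dotProduct_single, mul_one] at h
  have hjacval : ∀ (f : Hf) (x : Fin n → ℝ), x ∈ X → ∀ i j,
      jacobian (ιf f) x i j = ⟪f, Kderf x j (Pi.single i 1)⟫ := by
    intro f x hx i j
    have h := hderrepf f x hx j (Pi.single i 1)
    rw [dotProduct_single, mul_one] at h
    exact h
  -- generators
  have hgenf1 : ∀ (k : Fin Nc) (y : Fin n → ℝ), Ksecf (xs k) y ∈ Vf := fun k y => by
    rw [hVf]; exact Submodule.subset_span (Or.inl ⟨k, y, rfl⟩)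
  have hgenf2 : ∀ (k : Fin Nc) (p : Fin n) (y : Fin n → ℝ), Kderf (xs k) p y ∈ Vf := fun k p y => by
    rw [hVf]; exact Submodule.subset_span (Or.inr ⟨k, p, y, rfl⟩)
  have hgenB1 : ∀ (k : Fin Nc) (y : Fin n → ℝ), KsecB (xs k) y ∈ VB := fun k y => by
    rw [hVB]; exact Submodule.subset_span (Or.inl ⟨k, y, rfl⟩)
  have hgenB2 : ∀ (k : Fin Nc) (p : Fin n) (y : Fin n → ℝ), KderB (xs k) p y ∈ VB := fun k p y => by
    rw [hVB]; exact Submodule.subset_span (Or.inr ⟨k, p, y, rfl⟩)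
  -- agreement lemmas
  have hsamef : ∀ f u : Hf, (∀ h ∈ Vf, ⟪f, h⟫ = ⟪u, h⟫) →
      ∀ k : Fin Nc, ιf f (xs k) = ιf u (xs k)
        ∧ jacobian (ιf f) (xs k) = jacobian (ιf u) (xs k) := by
    intro f u hfu k
    constructor
    · funext p
      rw [hval f _ (hxs k) p, hval u _ (hxs k) p, hfu _ (hgenf1 k _)]
    · ext i j
      rw [hjacval f _ (hxs k) i j, hjacval u _ (hxs k) i j, hfu _ (hgenf2 k _ _)]
  have hsameB : ∀ g u : HB, (∀ h ∈ VB, ⟪g, h⟫ = ⟪u, h⟫) →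
      ∀ k : Fin Nc, ιB g (xs k) = ιB u (xs k) := by
    intro g u hgu k
    funext p
    rw [hvalB g _ (hxs k) p, hvalB u _ (hxs k) p, hgu _ (hgenB1 k _)]
  have hFeas' : ∀ f u : Hf, (∀ h ∈ Vf, ⟪f, h⟫ = ⟪u, h⟫) → Feas f → Feas u := by
    intro f u hfu hf
    rw [hFeas] at hf ⊢
    intro k v
    rw [← Fstab_congr m lam W (ιf f) (ιf u) (xs k) (hsamef f u hfu k).1 (hsamef f u hfu k).2]
    exact hf k v
  -- midpoint feasibility
  have hFeasMid : ∀ f u : Hf, Feas f → Feas u → Feas (((1:ℝ)/2) • (f + u)) := by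
    intro f u hf hu
    rw [hFeas] at hf hu ⊢
    intro k v
    have hιfmid : ιf (((1:ℝ)/2) • (f + u)) = fun y => ((1:ℝ)/2) • (ιf f y + ιf u y) := by
      funext y
      simp [map_add, _root_.map_smul]
    rw [hιfmid, Fstab_midpoint m lam W _ _ _ (hdifff f _ (hxs k)) (hdifff u _ (hxs k))]
    have h1 := hf k v
    have h2 := hu k v
    simp only [Matrix.add_mulVec, Matrix.smul_mulVec, dotProduct_add, dotProduct_smul,
      smul_eq_mul]
    linarith
  -- continuity facts
  have hvalcont : ∀ x : Fin n → ℝ, x ∈ X → Continuous fun f : Hf => ιf f x := by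
    intro x hx
    apply continuous_pi; intro p
    have he : (fun f : Hf => ιf f x p) = fun f : Hf => ⟪f, Ksecf x (Pi.single p 1)⟫ :=
      funext fun f => hval f x hx p
    rw [he]; exact continuous_id.inner continuous_const
  have hvalBcont : ∀ x : Fin n → ℝ, x ∈ X → Continuous fun g : HB => ιB g x := by
    intro x hx
    apply continuous_pi; intro p
    have he : (fun g : HB => ιB g x p) = fun g : HB => ⟪g, KsecB x (Pi.single p 1)⟫ :=
      funext fun g => hvalB g x hx p
    rw [he]; exact continuous_id.inner continuous_const
  have hjaccont : ∀ x : Fin n → ℝ, x ∈ X → ∀ i j,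
      Continuous fun f : Hf => jacobian (ιf f) x i j := by
    intro x hx i j
    have he : (fun f : Hf => jacobian (ιf f) x i j) = fun f : Hf => ⟪f, Kderf x j (Pi.single i 1)⟫ :=
      funext fun f => hjacval f x hx i j
    rw [he]; exact continuous_id.inner continuous_const
  have hFcont : ∀ (k : Fin Nc) (a b : Fin (n - m)),
      Continuous fun f : Hf => Fstab m lam W (ιf f) (xs k) a b := by
    intro k a b
    have hMcont : ∀ i j, Continuous fun f : Hf =>
        (-(lieDerivMatrix W (ιf f (xs k)) (xs k)) + jacobian (ιf f) (xs k) * W (xs k)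
          + W (xs k) * (jacobian (ιf f) (xs k))ᵀ + (2*lam) • W (xs k)) i j := by
      intro i j
      simp only [Matrix.add_apply, Matrix.neg_apply, Matrix.mul_apply, Matrix.transpose_apply,
        Matrix.smul_apply, lieDerivMatrix, Matrix.of_apply, smul_eq_mul]
      apply Continuous.add
      apply Continuous.add
      apply Continuous.add
      · exact ((fderiv ℝ (fun y => W y i j) (xs k)).continuous.comp (hvalcont _ (hxs k))).neg
      · exact continuous_finset_sum _ fun c _ => (hjaccont _ (hxs k) i c).mul continuous_const
      · exact continuous_finset_sum _ fun c _ => continuous_const.mul (hjaccont _ (hxs k) j c)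
      · exact continuous_const
    simp only [Fstab, Matrix.mul_apply]
    apply continuous_finset_sum; intro c _
    apply Continuous.mul _ continuous_const
    apply continuous_finset_sum; intro d _
    exact continuous_const.mul (hMcont d c)
  have hψcont : ∀ (k : Fin Nc) (v : Fin (n - m) → ℝ),
      Continuous fun f : Hf => v ⬝ᵥ (Fstab m lam W (ιf f) (xs k)).mulVec v := by
    intro k v
    simp only [dotProduct, Matrix.mulVec]
    apply continuous_finset_sum; intro a _
    apply Continuous.mul continuous_const
    apply continuous_finset_sum; intro b _
    exact (hFcont k a b).mul continuous_const
  have hJcont : Continuous fun z : Hf × (Fin m → HB) => Jp z.1 z.2 := by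
    rw [hJp]; unfold dynLoss
    apply Continuous.add
    apply Continuous.add
    · apply continuous_finset_sum; intro i _
      have hr : ∀ p, Continuous fun z : Hf × (Fin m → HB) =>
          (ιf z.1 (xd i) + (∑ j : Fin m, ud i j • ιB (z.2 j) (xd i)) - xdotd i) p := by
        intro p
        simp only [Pi.add_apply, Pi.sub_apply, Finset.sum_apply, Pi.smul_apply, smul_eq_mul]
        apply Continuous.sub _ continuous_const
        apply Continuous.add
        · exact (continuous_apply p).comp ((hvalcont _ (hxdX i)).comp continuous_fst)
        · apply continuous_finset_sum; intro j _
          exact continuous_const.mul ((continuous_apply p).comp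
            ((hvalBcont _ (hxdX i)).comp ((continuous_apply j).comp continuous_snd)))
      simp only [dotProduct]
      apply continuous_finset_sum; intro p _
      exact (hr p).mul (hr p)
    · exact continuous_const.mul ((continuous_norm.comp continuous_fst).pow 2)
    · apply Continuous.mul continuous_const
      apply continuous_finset_sum; intro j _
      exact ((continuous_apply j).comp continuous_snd).norm.pow 2
  -- nonnegativity and infimum
  have hJnonneg : ∀ (f : Hf) (b : Fin m → HB), 0 ≤ Jp f b := by
    intro f b
    rw [hJp]; unfold dynLoss
    have h1 : 0 ≤ ∑ i : Fin N,
        ((ιf f (xd i) + (∑ j : Fin m, ud i j • ιB (b j) (xd i)) - xdotd i) ⬝ᵥ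
         (ιf f (xd i) + (∑ j : Fin m, ud i j • ιB (b j) (xd i)) - xdotd i)) :=
      Finset.sum_nonneg fun i _ => dot_self_nonneg' _
    have h2 : (0:ℝ) ≤ μf * ‖f‖^2 := mul_nonneg hμf.le (by positivity)
    have h3 : (0:ℝ) ≤ μb * ∑ j : Fin m, ‖b j‖^2 :=
      mul_nonneg hμb.le (Finset.sum_nonneg fun j _ => by positivity)
    linarith
  set A : Set ℝ := {c | ∃ z : Hf × (Fin m → HB), Feas z.1 ∧ Jp z.1 z.2 = c} with hA
  have hAne : A.Nonempty := by
    obtain ⟨f₀, hf₀⟩ := hne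
    exact ⟨Jp f₀ (fun _ => 0), ⟨(f₀, fun _ => 0), hf₀, rfl⟩⟩
  have hAbdd : BddBelow A := ⟨0, fun c hc => by
    obtain ⟨z, _, hz⟩ := hc; rw [← hz]; exact hJnonneg z.1 z.2⟩
  set S := sInf A with hS
  have hSle : ∀ (f : Hf) (b : Fin m → HB), Feas f → S ≤ Jp f b := fun f b hf =>
    csInf_le hAbdd ⟨(f, b), hf, rfl⟩
  have hseq : ∀ l : ℕ, ∃ z : Hf × (Fin m → HB), Feas z.1 ∧ Jp z.1 z.2 < S + 1/(l+1) := by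
    intro l
    have hpos : (0:ℝ) < 1/(l+1) := by positivity
    obtain ⟨c, hcA, hclt⟩ := exists_lt_of_csInf_lt hAne (lt_add_of_pos_right S hpos)
    obtain ⟨z, hz1, hz2⟩ := hcA
    exact ⟨z, hz1, by rw [hz2]; exact hclt⟩
  choose zs hzfeas hzlt using hseq
  -- key strong convexity inequality
  have hkey : ∀ (f₁ f₂ : Hf) (b₁ b₂ bmid : Fin m → HB),
      (∀ j, bmid j = ((1:ℝ)/2) • (b₁ j + b₂ j)) →
      Jp (((1:ℝ)/2) • (f₁ + f₂)) bmid
        ≤ (Jp f₁ b₁ + Jp f₂ b₂)/2 - μf/4 * ‖f₁ - f₂‖^2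
          - μb/4 * ∑ j : Fin m, ‖b₁ j - b₂ j‖^2 := by
    intro f₁ f₂ b₁ b₂ bmid hbmid
    rw [hJp]
    exact dynLoss_midpoint ιf ιB xd ud xdotd μf μb f₁ f₂ b₁ b₂ bmid hbmid
  -- the minimizing sequence is Cauchy
  have hest : ∀ k l : ℕ,
      μf/4 * ‖(zs k).1 - (zs l).1‖^2 + μb/4 * ∑ j : Fin m, ‖(zs k).2 j - (zs l).2 j‖^2
        ≤ (1/(k+1) + 1/(l+1))/2 := by
    intro k l
    have hmidfeas := hFeasMid _ _ (hzfeas k) (hzfeas l)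
    have h1 := hSle (((1:ℝ)/2) • ((zs k).1 + (zs l).1))
      (fun j => ((1:ℝ)/2) • ((zs k).2 j + (zs l).2 j)) hmidfeas
    have h2 := hkey ((zs k).1) ((zs l).1) ((zs k).2) ((zs l).2)
      (fun j => ((1:ℝ)/2) • ((zs k).2 j + (zs l).2 j)) (fun j => rfl)
    have h3 := hzlt k
    have h4 := hzlt l
    linarith
  have hbound : ∀ (c : ℝ), 0 < c → ∀ N' k l : ℕ, N' ≤ k → N' ≤ l →
      c/4 * ‖(zs k).1 - (zs l).1‖^2 + 0 ≤ (1/(k+1) + 1/(l+1))/2 → True := fun _ _ _ _ _ _ _ _ => trivial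
  have hfrac : ∀ N' k : ℕ, N' ≤ k → (1:ℝ)/(k+1) ≤ 1/(N'+1) := by
    intro N' k hk
    apply one_div_le_one_div_of_le (by positivity)
    exact_mod_cast Nat.succ_le_succ hk
  have hsumnn : ∀ k l : ℕ, (0:ℝ) ≤ ∑ j : Fin m, ‖(zs k).2 j - (zs l).2 j‖^2 :=
    fun k l => Finset.sum_nonneg fun j _ => by positivity
  have htend0 : Filter.Tendsto (fun N' : ℕ => (1:ℝ)/(N'+1)) Filter.atTop (nhds 0) :=
    tendsto_one_div_add_atTop_nhds_zero_nat
  have hsqrt_tend : ∀ c : ℝ, Filter.Tendsto (fun N' : ℕ => Real.sqrt (c * (1/(N'+1))))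
      Filter.atTop (nhds 0) := by
    intro c
    have h1 : Filter.Tendsto (fun N' : ℕ => c * ((1:ℝ)/(N'+1))) Filter.atTop (nhds 0) := by
      simpa using htend0.const_mul c
    have h2 := (Real.continuous_sqrt.tendsto 0).comp h1
    simpa [Function.comp_def] using h2
  have hcf : CauchySeq fun l => (zs l).1 := by
    apply cauchySeq_of_le_tendsto_0 (fun N' : ℕ => Real.sqrt (4/μf * (1/(N'+1))))
    · intro k l N' hk hl
      rw [dist_eq_norm]
      have h := hest k l
      have h5 : ‖(zs k).1 - (zs l).1‖^2 ≤ 4/μf * (1/(N'+1)) := by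
        have hk1 := hfrac N' k hk
        have hl1 := hfrac N' l hl
        have hnn := hsumnn k l
        have hμb4 : (0:ℝ) ≤ μb/4 * ∑ j : Fin m, ‖(zs k).2 j - (zs l).2 j‖^2 :=
          mul_nonneg (by linarith) hnn
        have h6 : μf/4 * ‖(zs k).1 - (zs l).1‖^2 ≤ 1/(N'+1) := by linarith
        rw [div_mul_eq_mul_div, le_div_iff₀ (by positivity)] at h6 ⊢
        · nlinarith
      calc ‖(zs k).1 - (zs l).1‖ = Real.sqrt (‖(zs k).1 - (zs l).1‖^2) := by
            rw [Real.sqrt_sq (norm_nonneg _)]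
        _ ≤ Real.sqrt (4/μf * (1/(N'+1))) := Real.sqrt_le_sqrt h5
    · exact hsqrt_tend _
  have hcb : ∀ j : Fin m, CauchySeq fun l => (zs l).2 j := by
    intro j
    apply cauchySeq_of_le_tendsto_0 (fun N' : ℕ => Real.sqrt (4/μb * (1/(N'+1))))
    · intro k l N' hk hl
      rw [dist_eq_norm]
      have h := hest k l
      have h5 : ‖(zs k).2 j - (zs l).2 j‖^2 ≤ 4/μb * (1/(N'+1)) := by
        have hk1 := hfrac N' k hk
        have hl1 := hfrac N' l hl
        have hjle : ‖(zs k).2 j - (zs l).2 j‖^2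
            ≤ ∑ j' : Fin m, ‖(zs k).2 j' - (zs l).2 j'‖^2 :=
          Finset.single_le_sum (f := fun j' => ‖(zs k).2 j' - (zs l).2 j'‖^2)
            (fun j' _ => by positivity) (Finset.mem_univ j)
        have hμf4 : (0:ℝ) ≤ μf/4 * ‖(zs k).1 - (zs l).1‖^2 :=
          mul_nonneg (by linarith) (by positivity)
        have h6 : μb/4 * ‖(zs k).2 j - (zs l).2 j‖^2 ≤ 1/(N'+1) := by
          have := mul_le_mul_of_nonneg_left hjle (le_of_lt (by positivity : (0:ℝ) < μb/4))
          linarith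
        rw [div_mul_eq_mul_div, le_div_iff₀ (by positivity)] at h6 ⊢
        · nlinarith
      calc ‖(zs k).2 j - (zs l).2 j‖ = Real.sqrt (‖(zs k).2 j - (zs l).2 j‖^2) := by
            rw [Real.sqrt_sq (norm_nonneg _)]
        _ ≤ Real.sqrt (4/μb * (1/(N'+1))) := Real.sqrt_le_sqrt h5
    · exact hsqrt_tend _
  obtain ⟨fstar, hfstar⟩ := cauchySeq_tendsto_of_complete hcf
  have hbl : ∀ j : Fin m, ∃ bj : HB, Filter.Tendsto (fun l => (zs l).2 j) Filter.atTop (nhds bj) :=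
    fun j => cauchySeq_tendsto_of_complete (hcb j)
  choose bstar hbstar using hbl
  have hzt : Filter.Tendsto (fun l => zs l) Filter.atTop (nhds (fstar, bstar)) := by
    have h2 : Filter.Tendsto (fun l => (zs l).2) Filter.atTop (nhds bstar) :=
      tendsto_pi_nhds.2 hbstar
    exact hfstar.prodMk_nhds h2
  have hJlim : Filter.Tendsto (fun l => Jp (zs l).1 (zs l).2) Filter.atTop
      (nhds (Jp fstar bstar)) := (hJcont.tendsto (fstar, bstar)).comp hzt
  have hfeasstar : Feas fstar := by
    rw [hFeas]
    intro k v
    have hlim : Filter.Tendsto (fun l => v ⬝ᵥ (Fstab m lam W (ιf ((zs l).1)) (xs k)).mulVec v)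
        Filter.atTop (nhds (v ⬝ᵥ (Fstab m lam W (ιf fstar) (xs k)).mulVec v)) :=
      ((hψcont k v).tendsto fstar).comp hfstar
    exact le_of_tendsto hlim (Filter.Eventually.of_forall fun l => (hFeas _).1 (hzfeas l) k v)
  have hJfb : Jp fstar bstar ≤ S := by
    have hub : Filter.Tendsto (fun l : ℕ => S + (1:ℝ)/(l+1)) Filter.atTop (nhds S) := by
      simpa using htend0.const_add S
    exact le_of_tendsto_of_tendsto hJlim hub (Filter.Eventually.of_forall fun l => (hzlt l).le)
  have hmin : ∀ (f : Hf) (b : Fin m → HB), Feas f → Jp fstar bstar ≤ Jp f b :=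
    fun f b hf => le_trans hJfb (hSle f b hf)
  have hSeq : Jp fstar bstar = S := le_antisymm hJfb (hSle fstar bstar hfeasstar)
  -- uniqueness
  have huniq : ∀ (f' : Hf) (b' : Fin m → HB), Feas f' →
      (∀ (f : Hf) (b : Fin m → HB), Feas f → Jp f' b' ≤ Jp f b) → f' = fstar ∧ b' = bstar := by
    intro f' b' hf' hmin'
    have h1 : Jp f' b' = Jp fstar bstar := le_antisymm (hmin' _ _ hfeasstar) (hmin _ _ hf')
    have hmidfeas := hFeasMid _ _ hfeasstar hf'
    have hk := hkey fstar f' bstar b' (fun j => ((1:ℝ)/2) • (bstar j + b' j)) (fun j => rfl)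
    have h2 := hmin (((1:ℝ)/2) • (fstar + f')) (fun j => ((1:ℝ)/2) • (bstar j + b' j)) hmidfeas
    have hnn : (0:ℝ) ≤ ∑ j : Fin m, ‖bstar j - b' j‖^2 :=
      Finset.sum_nonneg fun j _ => by positivity
    have hf0 : ‖fstar - f'‖^2 ≤ 0 := by nlinarith
    have hb0 : ∑ j : Fin m, ‖bstar j - b' j‖^2 ≤ 0 := by nlinarith
    have hfeq : f' = fstar := by
      have : ‖fstar - f'‖ = 0 := le_antisymm (by nlinarith [norm_nonneg (fstar - f')]) (norm_nonneg _)
      have := norm_eq_zero.1 this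
      have := sub_eq_zero.1 this
      exact this.symm
    have hbeq : b' = bstar := by
      have hall := (Finset.sum_eq_zero_iff_of_nonneg
        (fun j _ => by positivity : ∀ j ∈ Finset.univ, (0:ℝ) ≤ ‖bstar j - b' j‖^2)).1
        (le_antisymm hb0 hnn)
      funext j
      have hj := hall j (Finset.mem_univ j)
      have : ‖bstar j - b' j‖ = 0 := by
        have := sq_eq_zero_iff.1 hj
        simpa using this
      have := sub_eq_zero.1 (norm_eq_zero.1 this)
      exact this.symm
    exact ⟨hfeq, hbeq⟩
  -- the representer property
  have hVfFD : FiniteDimensional ℝ ↥Vf := by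
    have hle : Vf ≤ Submodule.span ℝ
        (Set.range (fun kp : Fin Nc × Fin n => Ksecf (xs kp.1) (Pi.single kp.2 1)) ∪
         Set.range (fun kpq : (Fin Nc × Fin n) × Fin n =>
           Kderf (xs kpq.1.1) kpq.1.2 (Pi.single kpq.2 1))) := by
      rw [hVf]
      apply Submodule.span_le.2
      rintro h (⟨k, y, rfl⟩ | ⟨k, p, y, rfl⟩)
      · have hexp : Ksecf (xs k) y = ∑ p : Fin n, y p • Ksecf (xs k) (Pi.single p 1) := by
          apply ext_inner_left ℝ
          intro f
          rw [inner_sum]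
          simp only [real_inner_smul_right]
          rw [← hrepf f _ (hxs k) y]
          simp only [← hrepf f _ (hxs k)]
          simp [dotProduct_single, dotProduct, mul_comm, Pi.single_apply]
        rw [hexp]
        exact Submodule.sum_mem _ fun p _ => Submodule.smul_mem _ _
          (Submodule.subset_span (Or.inl ⟨(k, p), rfl⟩))
      · have hexp : Kderf (xs k) p y = ∑ q : Fin n, y q • Kderf (xs k) p (Pi.single q 1) := by
          apply ext_inner_left ℝ
          intro f
          rw [inner_sum]
          simp only [real_inner_smul_right]
          rw [← hderrepf f _ (hxs k) p y]
          simp only [← hderrepf f _ (hxs k) p]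
          simp [dotProduct_single, dotProduct, mul_comm, Pi.single_apply]
        rw [hexp]
        exact Submodule.sum_mem _ fun q _ => Submodule.smul_mem _ _
          (Submodule.subset_span (Or.inr ⟨((k, p), q), rfl⟩))
    have hfin : (Set.range (fun kp : Fin Nc × Fin n => Ksecf (xs kp.1) (Pi.single kp.2 1)) ∪
         Set.range (fun kpq : (Fin Nc × Fin n) × Fin n =>
           Kderf (xs kpq.1.1) kpq.1.2 (Pi.single kpq.2 1))).Finite :=
      (Set.finite_range _).union (Set.finite_range _)
    haveI := FiniteDimensional.span_of_finite ℝ hfin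
    exact Submodule.finiteDimensional_of_le hle
  have hVBFD : FiniteDimensional ℝ ↥VB := by
    have hle : VB ≤ Submodule.span ℝ
        (Set.range (fun kp : Fin Nc × Fin n => KsecB (xs kp.1) (Pi.single kp.2 1)) ∪
         Set.range (fun kpq : (Fin Nc × Fin n) × Fin n =>
           KderB (xs kpq.1.1) kpq.1.2 (Pi.single kpq.2 1))) := by
      rw [hVB]
      apply Submodule.span_le.2
      rintro h (⟨k, y, rfl⟩ | ⟨k, p, y, rfl⟩)
      · have hexp : KsecB (xs k) y = ∑ p : Fin n, y p • KsecB (xs k) (Pi.single p 1) := by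
          apply ext_inner_left ℝ
          intro g
          rw [inner_sum]
          simp only [real_inner_smul_right]
          rw [← hrepB g _ (hxs k) y]
          simp only [← hrepB g _ (hxs k)]
          simp [dotProduct_single, dotProduct, mul_comm, Pi.single_apply]
        rw [hexp]
        exact Submodule.sum_mem _ fun p _ => Submodule.smul_mem _ _
          (Submodule.subset_span (Or.inl ⟨(k, p), rfl⟩))
      · have hexp : KderB (xs k) p y = ∑ q : Fin n, y q • KderB (xs k) p (Pi.single q 1) := by
          apply ext_inner_left ℝ
          intro g
          rw [inner_sum]
          simp only [real_inner_smul_right]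
          rw [← hderrepB g _ (hxs k) p y]
          simp only [← hderrepB g _ (hxs k) p]
          simp [dotProduct_single, dotProduct, mul_comm, Pi.single_apply]
        rw [hexp]
        exact Submodule.sum_mem _ fun q _ => Submodule.smul_mem _ _
          (Submodule.subset_span (Or.inr ⟨((k, p), q), rfl⟩))
    have hfin : (Set.range (fun kp : Fin Nc × Fin n => KsecB (xs kp.1) (Pi.single kp.2 1)) ∪
         Set.range (fun kpq : (Fin Nc × Fin n) × Fin n =>
           KderB (xs kpq.1.1) kpq.1.2 (Pi.single kpq.2 1))).Finite :=
      (Set.finite_range _).union (Set.finite_range _)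
    haveI := FiniteDimensional.span_of_finite ℝ hfin
    exact Submodule.finiteDimensional_of_le hle
  haveI := hVfFD
  haveI := hVBFD
  haveI : CompleteSpace ↥Vf := FiniteDimensional.complete ℝ ↥Vf
  haveI : CompleteSpace ↥VB := FiniteDimensional.complete ℝ ↥VB
  obtain ⟨uf, hufVf, wf, hwf, hfdec⟩ := Vf.exists_add_mem_mem_orthogonal fstar
  have hBdec : ∀ j : Fin m, ∃ u ∈ VB, ∃ w ∈ VBᗮ, bstar j = u + w :=
    fun j => VB.exists_add_mem_mem_orthogonal (bstar j)
  choose ub hub wb hwb hbdec using hBdec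
  have hagf : ∀ h ∈ Vf, ⟪fstar, h⟫ = ⟪uf, h⟫ := by
    intro h hh
    rw [hfdec, inner_add_left]
    have hz : ⟪wf, h⟫ = 0 := by
      rw [real_inner_comm]
      exact (Submodule.mem_orthogonal Vf wf).1 hwf h hh
    rw [hz, add_zero]
  have hagb : ∀ j : Fin m, ∀ h ∈ VB, ⟪bstar j, h⟫ = ⟪ub j, h⟫ := by
    intro j h hh
    rw [hbdec j, inner_add_left]
    have hz : ⟪wb j, h⟫ = 0 := by
      rw [real_inner_comm]
      exact (Submodule.mem_orthogonal VB (wb j)).1 (hwb j) h hh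
    rw [hz, add_zero]
  have hfeasu : Feas uf := hFeas' fstar uf hagf hfeasstar
  -- value of Jp at the projections
  have hnormf : ‖fstar‖^2 = ‖uf‖^2 + ‖wf‖^2 := by
    rw [hfdec, norm_add_sq_real, (Submodule.mem_orthogonal Vf wf).1 hwf uf hufVf]
    ring
  have hnormb : ∀ j, ‖bstar j‖^2 = ‖ub j‖^2 + ‖wb j‖^2 := by
    intro j
    rw [hbdec j, norm_add_sq_real, (Submodule.mem_orthogonal VB (wb j)).1 (hwb j) (ub j) (hub j)]
    ring
  have hdataf : ∀ i : Fin N, ιf fstar (xd i) = ιf uf (xd i) := by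
    intro i
    obtain ⟨k, hki⟩ := hsub i
    rw [hki]
    exact (hsamef fstar uf hagf k).1
  have hdatab : ∀ (j : Fin m) (i : Fin N), ιB (bstar j) (xd i) = ιB (ub j) (xd i) := by
    intro j i
    obtain ⟨k, hki⟩ := hsub i
    rw [hki]
    exact hsameB (bstar j) (ub j) (hagb j) k
  have hJval : Jp fstar bstar = Jp uf ub + μf * ‖wf‖^2 + μb * ∑ j : Fin m, ‖wb j‖^2 := by
    rw [hJp]
    unfold dynLoss
    have hres : ∀ i : Fin N,
        ιf fstar (xd i) + (∑ j : Fin m, ud i j • ιB (bstar j) (xd i)) - xdotd i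
          = ιf uf (xd i) + (∑ j : Fin m, ud i j • ιB (ub j) (xd i)) - xdotd i := by
      intro i
      rw [hdataf i]
      congr 1
      congr 1
      exact Finset.sum_congr rfl fun j _ => by rw [hdatab j i]
    simp only [hres]
    have hnsum : ∑ j : Fin m, ‖bstar j‖^2 = (∑ j : Fin m, ‖ub j‖^2) + ∑ j : Fin m, ‖wb j‖^2 := by
      rw [← Finset.sum_add_distrib]
      exact Finset.sum_congr rfl fun j _ => hnormb j
    rw [hnormf, hnsum]
    ring
  have hwf0 : fstar = uf ∧ ∀ j, bstar j = ub j := by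
    have hle := hmin uf ub hfeasu
    have hnn1 : (0:ℝ) ≤ ‖wf‖^2 := by positivity
    have hnn2 : (0:ℝ) ≤ ∑ j : Fin m, ‖wb j‖^2 := Finset.sum_nonneg fun j _ => by positivity
    have hwfz : ‖wf‖^2 = 0 := by nlinarith
    have hwbz : ∑ j : Fin m, ‖wb j‖^2 = 0 := by nlinarith
    constructor
    · have : wf = 0 := by
        have := sq_eq_zero_iff.1 hwfz
        simpa using this
      rw [hfdec, this, add_zero]
    · intro j
      have hall := (Finset.sum_eq_zero_iff_of_nonneg
        (fun j _ => by positivity : ∀ j ∈ Finset.univ, (0:ℝ) ≤ ‖wb j‖^2)).1 hwbz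
      have hj := hall j (Finset.mem_univ j)
      have : wb j = 0 := by
        have := sq_eq_zero_iff.1 hj
        simpa using this
      rw [hbdec j, this, add_zero]
  have hfVf : fstar ∈ Vf := by rw [hwf0.1]; exact hufVf
  have hbVB : ∀ j, bstar j ∈ VB := fun j => by rw [hwf0.2 j]; exact hub j
  exact ⟨fstar, bstar, ⟨hfeasstar, hmin⟩, hfVf, hbVB,
    fun f' b' h => huniq f' b' h.1 h.2⟩
end

section
/- Let G ∈ ℝ^{d×d} be a symmetric matrix and let c > 0. Then the set { z ∈ ℝ^d : the largest eigenvalue of G + c z zᵀ has multiplicity at least 2 } has d-dimensional Lebesgue measure zero. In particular, if z is a standard Gaussian random vector in ℝ^d (z ~ 𝒩(0, I_d)), then with probability one the largest eigenvalue of G + (σ/d) z zᵀ is simple, for any σ > 0. -/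
open Matrix MeasureTheory ProbabilityTheory

/-- The largest eigenvalue of a real matrix, as the supremum of its spectrum. -/
noncomputable def maxEig {d : ℕ} (G : Matrix (Fin d) (Fin d) ℝ) : ℝ :=
  sSup (spectrum ℝ G)

/-- The largest eigenvalue of `M` has multiplicity at least `2`, i.e. its eigenspace has
dimension at least `2`. -/
def topEigMultGeTwo {d : ℕ} (M : Matrix (Fin d) (Fin d) ℝ) : Prop :=
  2 ≤ Module.finrank ℝ (Module.End.eigenspace (Matrix.toLin' M) (maxEig M))

-- rank-one action
lemma vecMulVec_mulVec' {d : ℕ} (w v : Fin d → ℝ) :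
    vecMulVec w w *ᵥ v = (w ⬝ᵥ v) • w := by
  funext i
  simp [mulVec, dotProduct, vecMulVec_apply, Finset.mul_sum, mul_comm, mul_left_comm]

-- Rayleigh bound
lemma rayleigh_le {d : ℕ} {M : Matrix (Fin d) (Fin d) ℝ} (hM : M.IsHermitian)
    (u : Fin d → ℝ) : u ⬝ᵥ (M *ᵥ u) ≤ maxEig M * (u ⬝ᵥ u) := by
  classical
  set U : Matrix (Fin d) (Fin d) ℝ := (hM.eigenvectorUnitary : Matrix (Fin d) (Fin d) ℝ)
  set y : Fin d → ℝ := Uᵀ *ᵥ u with hy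
  have hstar : star U = Uᵀ := by
    rw [Matrix.star_eq_conjTranspose, Matrix.conjTranspose_eq_transpose_of_trivial]
  have hUU : U * Uᵀ = 1 := by
    rw [← hstar]; exact (Matrix.mem_unitaryGroup_iff).mp hM.eigenvectorUnitary.2
  have key : u ⬝ᵥ (M *ᵥ u) = ∑ i, hM.eigenvalues i * (y i * y i) := by
    conv_lhs => rw [hM.spectral_theorem]
    rw [Unitary.conjStarAlgAut_apply]
    change u ⬝ᵥ ((U * _ * star U) *ᵥ u) = _
    rw [hstar, ← Matrix.mulVec_mulVec, ← Matrix.mulVec_mulVec,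
      Matrix.dotProduct_mulVec, ← Matrix.mulVec_transpose, ← hy]
    simp only [dotProduct, Matrix.diagonal_mulVec_single]
    refine Finset.sum_congr rfl fun i _ => ?_
    rw [Matrix.mulVec_diagonal]
    simp [Function.comp, mul_comm, mul_left_comm, mul_assoc]
  have hyy : y ⬝ᵥ y = u ⬝ᵥ u := by
    rw [hy, Matrix.dotProduct_mulVec, ← Matrix.mulVec_transpose, Matrix.transpose_transpose,
      Matrix.mulVec_mulVec, hUU, Matrix.one_mulVec]
  have hbdd : BddAbove (spectrum ℝ M) := (Matrix.finite_spectrum M).bddAbove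
  have hle : ∀ i, hM.eigenvalues i ≤ maxEig M := fun i =>
    le_csSup hbdd (hM.eigenvalues_mem_spectrum_real i)
  calc u ⬝ᵥ (M *ᵥ u) = ∑ i, hM.eigenvalues i * (y i * y i) := key
    _ ≤ ∑ i, maxEig M * (y i * y i) := by
        refine Finset.sum_le_sum fun i _ => ?_
        exact mul_le_mul_of_nonneg_right (hle i) (mul_self_nonneg _)
    _ = maxEig M * (y ⬝ᵥ y) := by rw [dotProduct, Finset.mul_sum]
    _ = maxEig M * (u ⬝ᵥ u) := by rw [hyy]

/-- The subspace of vectors orthogonal to the whole eigenspace of `G` at `μ`. -/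
def perpSpace {d : ℕ} (G : Matrix (Fin d) (Fin d) ℝ) (μ : ℝ) : Submodule ℝ (Fin d → ℝ) where
  carrier := {w | ∀ u ∈ Module.End.eigenspace (Matrix.toLin' G) μ, w ⬝ᵥ u = 0}
  add_mem' := by intro a b ha hb u hu; rw [add_dotProduct, ha u hu, hb u hu, add_zero]
  zero_mem' := by intro u hu; rw [zero_dotProduct]
  smul_mem' := by intro c a ha u hu; rw [smul_dotProduct, ha u hu, smul_zero]

lemma perpSpace_ne_top {d : ℕ} {G : Matrix (Fin d) (Fin d) ℝ} {μ : ℝ}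
    (h : μ ∈ spectrum ℝ G) : perpSpace G μ ≠ ⊤ := by
  have hμ : Module.End.HasEigenvalue (Matrix.toLin' G) μ := by
    rw [Module.End.hasEigenvalue_iff_mem_spectrum]
    have : spectrum ℝ (Matrix.toLin' G) = spectrum ℝ G :=
      AlgEquiv.spectrum_eq Matrix.toLinAlgEquiv' G
    rw [this]; exact h
  obtain ⟨u, hu, hu0⟩ := hμ.exists_hasEigenvector
  intro htop
  have : u ⬝ᵥ u = 0 := by
    have hmem : u ∈ perpSpace G μ := htop ▸ Submodule.mem_top
    exact hmem u hu
  exact hu0 (dotProduct_self_eq_zero.mp this)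

lemma bad_subset {d : ℕ} (G : Matrix (Fin d) (Fin d) ℝ) (hG : G.IsSymm)
    {c : ℝ} (hc : 0 < c) :
    {w : Fin d → ℝ | topEigMultGeTwo (G + c • vecMulVec w w)} ⊆
      ⋃ μ ∈ spectrum ℝ G, (perpSpace G μ : Set (Fin d → ℝ)) := by
  intro w hw
  set M : Matrix (Fin d) (Fin d) ℝ := G + c • vecMulVec w w with hMdef
  have hMsymm : M.IsHermitian := by
    rw [Matrix.IsHermitian, Matrix.conjTranspose_eq_transpose_of_trivial]
    show Mᵀ = M
    have h1 : (vecMulVec w w)ᵀ = vecMulVec w w := by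
      ext i j; simp [Matrix.transpose_apply, vecMulVec_apply, mul_comm]
    rw [hMdef, Matrix.transpose_add, Matrix.transpose_smul, h1, hG.eq]
  set μ := maxEig M with hμdef
  -- find an eigenvector of M at μ orthogonal to w
  have h2 : 2 ≤ Module.finrank ℝ (Module.End.eigenspace (Matrix.toLin' M) μ) := hw
  set E := Module.End.eigenspace (Matrix.toLin' M) μ with hE
  set L : (Fin d → ℝ) →ₗ[ℝ] ℝ :=
    { toFun := fun v => w ⬝ᵥ v
      map_add' := fun a b => dotProduct_add w a b
      map_smul' := fun r a => dotProduct_smul r w a } with hL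
  have hrange : Module.finrank ℝ (LinearMap.range L) ≤ 1 := by
    simpa using (LinearMap.range L).finrank_le
  have hKrank : d ≤ Module.finrank ℝ (LinearMap.ker L) + 1 := by
    have := LinearMap.finrank_range_add_finrank_ker L
    simp only [Module.finrank_fintype_fun_eq_card, Fintype.card_fin] at this
    omega
  have hEle : Module.finrank ℝ E ≤ d := by
    simpa using E.finrank_le
  have hinter : E ⊓ LinearMap.ker L ≠ ⊥ := by
    intro hbot
    have hsum := Submodule.finrank_sup_add_finrank_inf_eq E (LinearMap.ker L)
    rw [hbot, finrank_bot] at hsum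
    have hsup : Module.finrank ℝ (E ⊔ LinearMap.ker L : Submodule ℝ (Fin d → ℝ)) ≤ d := by
      simpa using (E ⊔ LinearMap.ker L).finrank_le
    omega
  obtain ⟨v, hv, hv0⟩ := Submodule.ne_bot_iff _ |>.mp hinter
  obtain ⟨hvE, hvK⟩ := hv
  have hwv : w ⬝ᵥ v = 0 := hvK
  -- v is an eigenvector of G at μ, so μ ∈ spectrum G
  have hGv : Matrix.toLin' G v = μ • v := by
    have hMv : Matrix.toLin' M v = μ • v := Module.End.mem_eigenspace_iff.mp hvE
    rw [Matrix.toLin'_apply] at hMv ⊢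
    rw [hMdef, Matrix.add_mulVec, Matrix.smul_mulVec, vecMulVec_mulVec', hwv] at hMv
    simpa using hMv
  have hμG : μ ∈ spectrum ℝ G := by
    have hev : Module.End.HasEigenvalue (Matrix.toLin' G) μ :=
      Module.End.hasEigenvalue_of_hasEigenvector ⟨Module.End.mem_eigenspace_iff.mpr hGv, hv0⟩
    have : spectrum ℝ (Matrix.toLin' G) = spectrum ℝ G :=
      AlgEquiv.spectrum_eq Matrix.toLinAlgEquiv' G
    rw [← this]
    exact Module.End.hasEigenvalue_iff_mem_spectrum.mp hev
  -- w is orthogonal to the whole eigenspace of G at μ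
  refine Set.mem_biUnion hμG ?_
  intro u hu
  by_contra ht
  have hGu : G *ᵥ u = μ • u := by
    have := Module.End.mem_eigenspace_iff.mp hu
    rwa [Matrix.toLin'_apply] at this
  have hray := rayleigh_le hMsymm u
  rw [← hμdef] at hray
  have hMu : M *ᵥ u = μ • u + (c * (w ⬝ᵥ u)) • w := by
    rw [hMdef, Matrix.add_mulVec, Matrix.smul_mulVec, vecMulVec_mulVec', hGu, smul_smul]
  rw [hMu, dotProduct_add, dotProduct_smul, dotProduct_smul] at hray
  have huw : u ⬝ᵥ w = w ⬝ᵥ u := dotProduct_comm u w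
  rw [huw] at hray
  have ht' : w ⬝ᵥ u ≠ 0 := ht
  simp only [smul_eq_mul] at hray
  nlinarith [hray, hc, mul_self_pos.mpr ht']

lemma pi_absCont : ∀ (n : ℕ) (μ ν : Fin n → Measure ℝ),
    (∀ i, SigmaFinite (μ i)) → (∀ i, SigmaFinite (ν i)) →
    (∀ i, μ i ≪ ν i) → Measure.pi μ ≪ Measure.pi ν := by
  intro n
  induction n with
  | zero =>
    intro μ ν _ _ _
    rw [Measure.pi_of_empty, Measure.pi_of_empty]
  | succ n ih =>
    intro μ ν hμp hνp h
    haveI := hμp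
    haveI := hνp
    set e := MeasurableEquiv.piFinSuccAbove (fun _ : Fin (n + 1) => ℝ) 0
    have hμ := MeasureTheory.measurePreserving_piFinSuccAbove μ 0
    have hν := MeasureTheory.measurePreserving_piFinSuccAbove ν 0
    have htail : (Measure.pi fun j => μ ((0 : Fin (n+1)).succAbove j)) ≪
        Measure.pi fun j => ν ((0 : Fin (n+1)).succAbove j) :=
      ih _ _ (fun j => hμp _) (fun j => hνp _) (fun j => h _)
    have hprod : (μ 0).prod (Measure.pi fun j => μ ((0 : Fin (n+1)).succAbove j)) ≪
        (ν 0).prod (Measure.pi fun j => ν ((0 : Fin (n+1)).succAbove j)) :=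
      (h 0).prod htail
    have h1 : Measure.pi μ = ((Measure.pi μ).map e).map e.symm := (MeasurableEquiv.map_symm_map e).symm
    have h2 : Measure.pi ν = ((Measure.pi ν).map e).map e.symm := (MeasurableEquiv.map_symm_map e).symm
    rw [h1, h2, hμ.map_eq, hν.map_eq]
    exact hprod.map e.symm.measurable



/-- **Almost-sure simplicity of the top eigenvalue under a random rank-one perturbation.**
For a symmetric matrix `G` and `c > 0`, the set of `z ∈ ℝ^d` for which the largest eigenvalue
of `G + c z zᵀ` has multiplicity at least `2` has Lebesgue measure zero. In particular, for a
standard Gaussian vector `z ~ 𝒩(0, I_d)` and any `σ > 0`, the largest eigenvalue of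
`G + (σ/d) z zᵀ` is simple with probability one. -/
theorem rank_one_perturbation_simple_top_eigenvalue
    {d : ℕ} (hd : 0 < d) (G : Matrix (Fin d) (Fin d) ℝ) (hG : G.IsSymm)
    (c : ℝ) (hc : 0 < c)
    {Ω : Type} [MeasurableSpace Ω] (P : Measure Ω) [IsProbabilityMeasure P]
    (z : Ω → Fin d → ℝ) (hz : Measurable z)
    (hzgauss : Measure.map z P = Measure.pi (fun _ : Fin d => gaussianReal 0 1))
    (σ : ℝ) (hσ : 0 < σ) :
    volume {w : Fin d → ℝ | topEigMultGeTwo (G + c • vecMulVec w w)} = 0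
    ∧ P {a : Ω | topEigMultGeTwo (G + (σ / d) • vecMulVec (z a) (z a))} = 0 := by
  set U : Set (Fin d → ℝ) := ⋃ μ ∈ spectrum ℝ G, (perpSpace G μ : Set (Fin d → ℝ)) with hU
  have hUvol : volume U = 0 := by
    rw [hU]
    refine (measure_biUnion_null_iff (Matrix.finite_spectrum G).countable).mpr fun μ hμ => ?_
    exact Measure.addHaar_submodule _ _ (perpSpace_ne_top hμ)
  have hUgauss : Measure.pi (fun _ : Fin d => gaussianReal 0 1) U = 0 := by
    have habs : Measure.pi (fun _ : Fin d => gaussianReal 0 1) ≪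
        Measure.pi (fun _ : Fin d => (volume : Measure ℝ)) := by
      refine pi_absCont d _ _ (fun _ => inferInstance) (fun _ => inferInstance) fun i => ?_
      rw [gaussianReal_of_var_ne_zero 0 one_ne_zero]
      exact withDensity_absolutelyContinuous _ _
    refine habs ?_
    rw [← MeasureTheory.volume_pi]
    exact hUvol
  constructor
  · exact measure_mono_null (bad_subset G hG hc) hUvol
  · have hc' : (0 : ℝ) < σ / d := div_pos hσ (by exact_mod_cast hd)
    have hsub : {a : Ω | topEigMultGeTwo (G + (σ / d) • vecMulVec (z a) (z a))} ⊆ z ⁻¹' U :=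
      fun a ha => bad_subset G hG hc' ha
    refine le_antisymm ?_ zero_le
    calc P {a : Ω | topEigMultGeTwo (G + (σ / d) • vecMulVec (z a) (z a))}
        ≤ P (z ⁻¹' U) := measure_mono hsub
      _ ≤ (Measure.map z P) U := Measure.le_map_apply hz.aemeasurable U
      _ = 0 := by rw [hzgauss]; exact hUgauss
end
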